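/- arXiv:1510.08036 — 6 statements merged into one kernel-verified Lean document; each statement's English description precedes it below -/
import Mathlib

section
/- For every k ≥ 2 and n ≥ 0, if π ∈ F^k_n(123), then the sequence of root values π(1), π(k+2), π(2k+3), …, π((k+1)(n−1)+1) is strictly decreasing, and the subsequence of π consisting of the values at leaf positions (all positions not of the form (k+1)i+1), read from left to right, is also strictly decreasing. -/
/-- `π` contains the pattern `ρ`. -/
def Contains {m k : ℕ} (π : Equiv.Perm (Fin m)) (ρ : Fin k → Fin k) : Prop :=
  ∃ f : Fin k → Fin m, StrictMono f ∧ ∀ a b : Fin k, π (f a) < π (f b) ↔ ρ a < ρ b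

/-- `π` avoids the pattern `ρ`. -/
def Avoids {m k : ℕ} (π : Equiv.Perm (Fin m)) (ρ : Fin k → Fin k) : Prop :=
  ¬ Contains π ρ

lemma leaf_lt {k n i j : ℕ} (hi : i < n) (hj : j ≤ k) : (k+1)*i + j < (k+1)*n := by
  have h1 : (k+1)*(i+1) ≤ (k+1)*n := Nat.mul_le_mul (le_refl (k+1)) hi
  have h2 : (k+1)*(i+1) = (k+1)*i + (k+1) := by ring
  omega

lemma root_lt {k n i : ℕ} (hi : i < n) : (k+1)*i < (k+1)*n := leaf_lt (j := 0) hi (Nat.zero_le k)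

/-- The defining property of (the permutation associated to) a `k`-ary shrub forest of `n`
shrubs: on each block of `k+1` consecutive positions, the first entry (the root) is smaller
than each of the following `k` entries (the leaves).  (Positions are 0-indexed.) -/
def IsKShrubForest (k n : ℕ) (π : Equiv.Perm (Fin ((k+1)*n))) : Prop :=
  ∀ i j : ℕ, (hi : i < n) → (hj1 : 1 ≤ j) → (hj2 : j ≤ k) →
    π ⟨(k+1)*i, root_lt hi⟩ < π ⟨(k+1)*i + j, leaf_lt hi hj2⟩

lemma no_incr3 {m : ℕ} (π : Equiv.Perm (Fin m))
    (hav : Avoids π (![0, 1, 2] : Fin 3 → Fin 3)) :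
    ∀ p q r : Fin m, p < q → q < r → π p < π q → π q < π r → False := by
  intro p q r hpq hqr h1 h2
  apply hav
  refine ⟨![p, q, r], ?_, ?_⟩
  · intro a b hab
    fin_cases a <;> fin_cases b <;>
      simp_all [Matrix.cons_val_zero, Matrix.cons_val_one] <;>
      first
      | exact hpq | exact hqr | exact hpq.trans hqr
      | exact absurd hab (by decide)
  · have h3 : π p < π r := h1.trans h2
    intro a b
    fin_cases a <;> fin_cases b <;>
      simp [Matrix.cons_val_zero, Matrix.cons_val_one] <;>
      first
      | exact h1 | exact h2 | exact h3
      | exact h1.le | exact h2.le | exact h3.le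
      | exact (lt_asymm h1) | exact (lt_asymm h2) | exact (lt_asymm h3)
      | exact lt_irrefl _ | exact le_refl _

/-- In a 123-avoiding `k`-ary shrub forest, the root labels are strictly decreasing
(from left to right), and so are the leaf labels. -/
theorem roots_and_leaves_decreasing (k n : ℕ) (hk : 2 ≤ k)
    (π : Equiv.Perm (Fin ((k+1)*n)))
    (hπ : IsKShrubForest k n π) (hav : Avoids π (![0, 1, 2] : Fin 3 → Fin 3)) :
    (∀ i j : ℕ, (hi : i < n) → (hj : j < n) → i < j →
        π ⟨(k+1)*j, root_lt hj⟩ < π ⟨(k+1)*i, root_lt hi⟩) ∧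
    (∀ a b : Fin ((k+1)*n), a < b → ¬ (k+1) ∣ (a : ℕ) → ¬ (k+1) ∣ (b : ℕ) →
        π b < π a) := by
  have H := no_incr3 π hav
  constructor
  · intro i j hi hj hij
    rcases lt_trichotomy (π ⟨(k+1)*j, root_lt hj⟩) (π ⟨(k+1)*i, root_lt hi⟩) with h | h | h
    · exact h
    · exfalso
      exact absurd (π.injective h) (by simp [Fin.ext_iff]; intro he; omega)
    · exfalso
      have hleaf := hπ j 1 hj le_rfl (by omega)
      refine H ⟨(k+1)*i, root_lt hi⟩ ⟨(k+1)*j, root_lt hj⟩ ⟨(k+1)*j+1, leaf_lt hj (by omega)⟩ ?_ ?_ h hleaf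
      · simp [Fin.lt_def]; nlinarith
      · simp [Fin.lt_def]
  · intro a b hab hda hdb
    have hia : (a:ℕ) / (k+1) < n := by
      have := a.isLt
      exact Nat.div_lt_of_lt_mul (by omega)
    have hja1 : 1 ≤ (a:ℕ) % (k+1) := by
      rcases Nat.eq_zero_or_pos ((a:ℕ) % (k+1)) with h0 | h0
      · exact absurd (Nat.dvd_of_mod_eq_zero h0) hda
      · exact h0
    have hja2 : (a:ℕ) % (k+1) ≤ k := by
      have := Nat.mod_lt (a:ℕ) (y := k+1) (by omega); omega
    have hroot := hπ ((a:ℕ)/(k+1)) ((a:ℕ)%(k+1)) hia hja1 hja2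
    have hae : (k+1) * ((a:ℕ)/(k+1)) + (a:ℕ)%(k+1) = (a:ℕ) := Nat.div_add_mod _ _
    rcases lt_trichotomy (π b) (π a) with h | h | h
    · exact h
    · exact absurd (π.injective h) (by simp [Fin.ext_iff]; omega)
    · exfalso
      have hra : (⟨(k+1) * ((a:ℕ)/(k+1)), root_lt hia⟩ : Fin ((k+1)*n)) < a := by
        simp [Fin.lt_def]; omega
      have hab' : a < b := hab
      have ha' : (⟨(k+1)*((a:ℕ)/(k+1)) + (a:ℕ)%(k+1), leaf_lt hia hja2⟩ : Fin ((k+1)*n)) = a := by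
        simp [Fin.ext_iff]; omega
      rw [ha'] at hroot
      exact H _ a b hra hab' hroot h
end

section
/- For every k ≥ 2 and n ≥ 0, the cardinality of F^k_n(123) equals (1/(kn+1)) · binomial((k+1)n, n). -/
open Finset

variable (k n : ℕ)

/-- length of the cycle -/
abbrev Tc (k n : ℕ) : ℕ := (k+1)*n+1

def wt (S : Finset (ZMod (Tc k n))) (x : ZMod (Tc k n)) : ℤ := if x ∈ S then (k : ℤ) else -1

def ps (S : Finset (ZMod (Tc k n))) (m : ℕ) : ℤ :=
  ∑ i ∈ Finset.range m, wt k n S (i : ZMod (Tc k n))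

def GoodZ (S : Finset (ZMod (Tc k n))) : Prop := ∀ j, j < Tc k n → 0 ≤ ps k n S j

lemma wt_sum (S : Finset (ZMod (Tc k n))) (hS : S.card = n) :
    ∑ x : ZMod (Tc k n), wt k n S x = -1 := by
  unfold wt
  rw [← Finset.sum_filter_add_sum_filter_not Finset.univ (· ∈ S)]
  have e1 : ∑ x ∈ Finset.univ.filter (· ∈ S), (if x ∈ S then (k:ℤ) else -1) = (n:ℤ)*k := by
    rw [Finset.sum_congr rfl (fun x hx => by
      rw [if_pos (Finset.mem_filter.1 hx).2]), Finset.sum_const, Finset.filter_univ_mem, hS,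
      nsmul_eq_mul]
  have e2 : ∑ x ∈ Finset.univ.filter (¬ · ∈ S), (if x ∈ S then (k:ℤ) else -1)
      = -((Tc k n : ℤ) - n) := by
    rw [Finset.sum_congr rfl (fun x hx => by
      rw [if_neg (Finset.mem_filter.1 hx).2]), Finset.sum_const]
    have : (Finset.univ.filter (¬ · ∈ S)).card = Tc k n - n := by
      rw [Finset.filter_not, Finset.filter_univ_mem,
        Finset.card_sdiff_of_subset (Finset.subset_univ S), hS, Finset.card_univ, ZMod.card]
    rw [this, nsmul_eq_mul]
    have h1 : n ≤ Tc k n := by unfold Tc; nlinarith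
    have h2 : ((Tc k n - n : ℕ) : ℤ) = (Tc k n : ℤ) - n := by rw [Nat.cast_sub h1]
    rw [h2]; ring
  rw [e1, e2]
  have h3 : ((Tc k n : ℕ) : ℤ) = (k:ℤ)*n + n + 1 := by show (((k+1)*n+1 : ℕ) : ℤ) = _; push_cast; ring
  rw [h3]; ring

lemma ps_add (S : Finset (ZMod (Tc k n))) (m j : ℕ) :
    ps k n S (m + j) = ps k n S m + ∑ i ∈ Finset.range j, wt k n S ((m + i : ℕ) : ZMod (Tc k n)) := by
  unfold ps
  rw [Finset.sum_range_add]

lemma ps_period (S : Finset (ZMod (Tc k n))) (hS : S.card = n) (m : ℕ) :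
    ps k n S (m + Tc k n) = ps k n S m - 1 := by
  rw [ps_add]
  have : ∑ i ∈ Finset.range (Tc k n), wt k n S ((m + i : ℕ) : ZMod (Tc k n))
      = ∑ x : ZMod (Tc k n), wt k n S x := by
    apply Finset.sum_nbij' (i := fun i => ((m + i : ℕ) : ZMod (Tc k n)))
      (j := fun x => (x - ((m : ℕ) : ZMod (Tc k n))).val)
    · intro a _; exact Finset.mem_univ _
    · intro x _; exact Finset.mem_range.2 (ZMod.val_lt _)
    · intro a ha
      have ha' : a < Tc k n := Finset.mem_range.1 ha
      push_cast
      rw [add_sub_cancel_left]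
      exact ZMod.val_cast_of_lt ha'
    · intro x _
      push_cast
      rw [ZMod.natCast_zmod_val, add_sub_cancel]
    · intro a _; rfl
  rw [this, wt_sum k n S hS]; ring

def GoodNat (S : Finset (ZMod (Tc k n))) (r : ℕ) : Prop :=
  ∀ j, j < Tc k n → ps k n S r ≤ ps k n S (r + j)

lemma exists_uniq_good (S : Finset (ZMod (Tc k n))) (hS : S.card = n) :
    ∃! r : ℕ, r < Tc k n ∧ GoodNat k n S r := by
  classical
  have hne : (Finset.range (Tc k n)).Nonempty := ⟨0, by simp [Tc]⟩
  obtain ⟨r₀, hr₀, hmin⟩ := Finset.exists_min_image (Finset.range (Tc k n)) (ps k n S) hne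
  have hP : ∃ r, r < Tc k n ∧ ∀ j, j < Tc k n → ps k n S r ≤ ps k n S j := by
    exact ⟨r₀, Finset.mem_range.1 hr₀, fun j hj => hmin j (Finset.mem_range.2 hj)⟩
  let r := Nat.find hP
  have hrT : r < Tc k n := (Nat.find_spec hP).1
  have hrmin : ∀ j, j < Tc k n → ps k n S r ≤ ps k n S j := (Nat.find_spec hP).2
  -- any t < r has ps t > ps r
  have hstrict : ∀ t, t < r → ps k n S r < ps k n S t := by
    intro t ht
    have := Nat.find_min hP ht
    push_neg at this
    have htT : t < Tc k n := lt_trans ht hrT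
    obtain ⟨j, hj, hjlt⟩ := this htT
    exact lt_of_le_of_lt (hrmin j hj) hjlt
  have hgood : GoodNat k n S r := by
    intro j hj
    by_cases hc : r + j < Tc k n
    · exact hrmin _ hc
    · push_neg at hc
      have ht : r + j - Tc k n < r := by omega
      have : r + j = (r + j - Tc k n) + Tc k n := by omega
      rw [this, ps_period k n S hS]
      have := hstrict _ ht
      omega
  refine ⟨r, ⟨hrT, hgood⟩, ?_⟩
  rintro r' ⟨hr'T, hgood'⟩
  by_contra hne'
  rcases lt_or_gt_of_ne hne' with h | h
  · -- r' < r
    have h1 : ps k n S r' ≤ ps k n S (r' + (r - r')) := hgood' _ (by omega)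
    rw [show r' + (r - r') = r by omega] at h1
    have h2 := hstrict r' h
    omega
  · -- r < r'
    have h1 : ps k n S r' ≤ ps k n S (r' + (Tc k n + r - r')) := hgood' _ (by omega)
    rw [show r' + (Tc k n + r - r') = r + Tc k n by omega, ps_period k n S hS] at h1
    have h2 := hrmin r' hr'T
    omega

def shiftZ (c : ZMod (Tc k n)) (S : Finset (ZMod (Tc k n))) : Finset (ZMod (Tc k n)) :=
  S.image (· + c)

lemma mem_shiftZ (c : ZMod (Tc k n)) (S : Finset (ZMod (Tc k n))) (x : ZMod (Tc k n)) :
    x ∈ shiftZ k n c S ↔ x - c ∈ S := by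
  unfold shiftZ
  constructor
  · rintro hx
    obtain ⟨y, hy, rfl⟩ := Finset.mem_image.1 hx
    simpa using hy
  · intro hx
    exact Finset.mem_image.2 ⟨x - c, hx, by ring⟩

lemma card_shiftZ (c : ZMod (Tc k n)) (S : Finset (ZMod (Tc k n))) :
    (shiftZ k n c S).card = S.card :=
  Finset.card_image_of_injective _ (add_left_injective c)

lemma shiftZ_shiftZ (c d : ZMod (Tc k n)) (S : Finset (ZMod (Tc k n))) :
    shiftZ k n c (shiftZ k n d S) = shiftZ k n (d + c) S := by
  unfold shiftZ
  rw [Finset.image_image]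
  apply Finset.image_congr
  intro x _
  simp [add_assoc]

lemma shiftZ_zero (S : Finset (ZMod (Tc k n))) : shiftZ k n 0 S = S := by
  ext x; rw [mem_shiftZ]; simp

lemma ps_shiftZ (r : ℕ) (S : Finset (ZMod (Tc k n))) (j : ℕ) :
    ps k n (shiftZ k n (-(r : ZMod (Tc k n))) S) j = ps k n S (r + j) - ps k n S r := by
  rw [ps_add]
  have : ∀ i : ℕ, wt k n (shiftZ k n (-(r : ZMod (Tc k n))) S) (i : ZMod (Tc k n))
      = wt k n S ((r + i : ℕ) : ZMod (Tc k n)) := by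
    intro i
    unfold wt
    refine if_congr ?_ rfl rfl
    rw [mem_shiftZ]
    have : (i : ZMod (Tc k n)) - -(r : ZMod (Tc k n)) = ((r + i : ℕ) : ZMod (Tc k n)) := by
      push_cast; ring
    rw [this]
  unfold ps
  rw [Finset.sum_congr rfl (fun i _ => this i)]
  ring

lemma goodZ_shiftZ_iff (r : ℕ) (S : Finset (ZMod (Tc k n))) :
    GoodZ k n (shiftZ k n (-(r : ZMod (Tc k n))) S) ↔ GoodNat k n S r := by
  unfold GoodZ GoodNat
  constructor
  · intro h j hj
    have := h j hj
    rw [ps_shiftZ] at this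
    omega
  · intro h j hj
    rw [ps_shiftZ]
    have := h j hj
    omega

lemma shift_good_exu (S : Finset (ZMod (Tc k n))) (hS : S.card = n) :
    ∃! c : ZMod (Tc k n), GoodZ k n (shiftZ k n c S) := by
  obtain ⟨r, ⟨hrT, hgood⟩, huniq⟩ := exists_uniq_good k n S hS
  refine ⟨-(r : ZMod (Tc k n)), (goodZ_shiftZ_iff k n r S).2 hgood, ?_⟩
  intro c hc
  set r' := (-c).val with hr'
  have hcr' : c = -(r' : ZMod (Tc k n)) := by
    rw [hr', ZMod.natCast_zmod_val, neg_neg]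
  rw [hcr'] at hc
  have hgood' : GoodNat k n S r' := (goodZ_shiftZ_iff k n r' S).1 hc
  have : r' = r := huniq r' ⟨ZMod.val_lt _, hgood'⟩
  rw [hcr', this]

lemma card_goodZ (hSdata : True) :
    Nat.card {S : Finset (ZMod (Tc k n)) // S.card = n ∧ GoodZ k n S} * (Tc k n)
      = (Tc k n).choose n := by
  classical
  have e : {S : Finset (ZMod (Tc k n)) // S.card = n ∧ GoodZ k n S} × ZMod (Tc k n)
      ≃ {S : Finset (ZMod (Tc k n)) // S.card = n} := by
    apply Equiv.ofBijective (f := fun p => ⟨shiftZ k n p.2 p.1.1,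
      by rw [card_shiftZ]; exact p.1.2.1⟩)
    constructor
    · rintro ⟨⟨S₁, hc₁, hg₁⟩, c₁⟩ ⟨⟨S₂, hc₂, hg₂⟩, c₂⟩ h
      have hA : shiftZ k n c₁ S₁ = shiftZ k n c₂ S₂ := congrArg Subtype.val h
      have hS₁ : shiftZ k n (-c₁) (shiftZ k n c₁ S₁) = S₁ := by
        rw [shiftZ_shiftZ, add_neg_cancel, shiftZ_zero]
      have hS₂ : shiftZ k n (-c₂) (shiftZ k n c₁ S₁) = S₂ := by
        rw [hA, shiftZ_shiftZ, add_neg_cancel, shiftZ_zero]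
      have hcardA : (shiftZ k n c₁ S₁).card = n := by rw [card_shiftZ]; exact hc₁
      obtain ⟨c₀, -, huniq⟩ := shift_good_exu k n (shiftZ k n c₁ S₁) hcardA
      have h1 : -c₁ = c₀ := huniq _ (by show GoodZ k n (shiftZ k n (-c₁) (shiftZ k n c₁ S₁)); rw [hS₁]; exact hg₁)
      have h2 : -c₂ = c₀ := huniq _ (by show GoodZ k n (shiftZ k n (-c₂) (shiftZ k n c₁ S₁)); rw [hS₂]; exact hg₂)
      have hc : c₁ = c₂ := neg_injective (h1.trans h2.symm)
      subst hc
      have hSeq : S₁ = S₂ := by rw [← hS₁, ← hS₂]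
      simp [Prod.ext_iff, Subtype.ext_iff, hSeq]
    · rintro ⟨A, hA⟩
      obtain ⟨c₀, hgood, -⟩ := shift_good_exu k n A hA
      refine ⟨⟨⟨shiftZ k n c₀ A, by rw [card_shiftZ]; exact hA, hgood⟩, -c₀⟩, ?_⟩
      apply Subtype.ext
      show shiftZ k n (-c₀) (shiftZ k n c₀ A) = A
      rw [shiftZ_shiftZ, add_neg_cancel, shiftZ_zero]
  have h1 : Nat.card ({S : Finset (ZMod (Tc k n)) // S.card = n ∧ GoodZ k n S} × ZMod (Tc k n))
      = Nat.card {S : Finset (ZMod (Tc k n)) // S.card = n} := Nat.card_congr e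
  rw [Nat.card_prod] at h1
  have h2 : Nat.card (ZMod (Tc k n)) = Tc k n := Nat.card_zmod _
  have h3 : Nat.card {S : Finset (ZMod (Tc k n)) // S.card = n} = (Tc k n).choose n := by
    rw [Nat.card_eq_fintype_card, Fintype.card_finset_len, ZMod.card]
  rw [h2, h3] at h1
  exact h1

/-! ### Part 3: subsets of `Fin ((k+1)*n)` with the ballot condition -/

abbrev Nn (k n : ℕ) : ℕ := (k+1)*n

def CondS (S' : Finset (Fin (Nn k n))) : Prop :=
  ∀ x ∈ S', (x : ℕ) ≤ (k+1) * (S'.filter (fun y : Fin (Nn k n) => (y:ℕ) < (x:ℕ))).card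

def embF (x : Fin (Nn k n)) : ZMod (Tc k n) := ((x : ℕ) : ZMod (Tc k n))

lemma embF_injective : Function.Injective (embF k n) := by
  intro x y h
  unfold embF at h
  have hx : (x:ℕ) < Tc k n := by have h1 := x.isLt; have h2 : Tc k n = Nn k n + 1 := rfl; omega
  have hy : (y:ℕ) < Tc k n := by have h1 := y.isLt; have h2 : Tc k n = Nn k n + 1 := rfl; omega
  have := congrArg ZMod.val h
  rw [ZMod.val_cast_of_lt hx, ZMod.val_cast_of_lt hy] at this
  exact Fin.ext this

def cntS (S' : Finset (Fin (Nn k n))) (m : ℕ) : ℕ :=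
  (S'.filter (fun y : Fin (Nn k n) => (y:ℕ) < m)).card

lemma mem_image_embF (S' : Finset (Fin (Nn k n))) (m : ℕ) (hm : m < Tc k n) :
    ((m : ZMod (Tc k n)) ∈ S'.image (embF k n)) ↔ (∃ h : m < Nn k n, (⟨m, h⟩ : Fin (Nn k n)) ∈ S') := by
  constructor
  · rintro hx
    obtain ⟨y, hy, he⟩ := Finset.mem_image.1 hx
    have hyv : (y:ℕ) < Tc k n := by have h1 := y.isLt; have h2 : Tc k n = Nn k n + 1 := rfl; omega
    have hv := congrArg ZMod.val he
    unfold embF at hv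
    rw [ZMod.val_cast_of_lt hyv, ZMod.val_cast_of_lt hm] at hv
    subst hv
    exact ⟨y.isLt, by simpa using hy⟩
  · rintro ⟨h, hmem⟩
    exact Finset.mem_image.2 ⟨⟨m, h⟩, hmem, rfl⟩

lemma cntS_succ (S' : Finset (Fin (Nn k n))) (m : ℕ) (hm : m < Nn k n) :
    cntS k n S' (m + 1) =
      cntS k n S' m + (if (⟨m, hm⟩ : Fin (Nn k n)) ∈ S' then 1 else 0) := by
  unfold cntS
  by_cases hmem : (⟨m, hm⟩ : Fin (Nn k n)) ∈ S'
  · rw [if_pos hmem]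
    have : S'.filter (fun y : Fin (Nn k n) => (y:ℕ) < m + 1)
        = insert (⟨m, hm⟩ : Fin (Nn k n)) (S'.filter (fun y : Fin (Nn k n) => (y:ℕ) < m)) := by
      ext y
      simp only [Finset.mem_filter, Finset.mem_insert]
      constructor
      · rintro ⟨hyS, hlt⟩
        by_cases hy : (y:ℕ) = m
        · left; exact Fin.ext hy
        · right; exact ⟨hyS, by omega⟩
      · rintro (rfl | ⟨hyS, hlt⟩)
        · exact ⟨hmem, by simp⟩
        · exact ⟨hyS, by omega⟩
    rw [this, Finset.card_insert_of_notMem (by simp)]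
  · rw [if_neg hmem]
    have : S'.filter (fun y : Fin (Nn k n) => (y:ℕ) < m + 1) = S'.filter (fun y : Fin (Nn k n) => (y:ℕ) < m) := by
      ext y
      simp only [Finset.mem_filter]
      constructor
      · rintro ⟨hyS, hlt⟩
        refine ⟨hyS, ?_⟩
        by_cases hy : (y:ℕ) = m
        · exact absurd hyS (by rwa [show y = (⟨m, hm⟩ : Fin (Nn k n)) from Fin.ext hy])
        · omega
      · rintro ⟨hyS, hlt⟩; exact ⟨hyS, by omega⟩
    rw [this]
    omega

lemma ps_image_embF (S' : Finset (Fin (Nn k n))) (m : ℕ) (hm : m ≤ Nn k n) :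
    ps k n (S'.image (embF k n)) m = (k+1) * (cntS k n S' m : ℤ) - m := by
  induction m with
  | zero => simp [ps, cntS]
  | succ m ih =>
    have hm' : m < Nn k n := by omega
    have hrec := ih (by omega)
    unfold ps at hrec ⊢
    rw [Finset.sum_range_succ, hrec, cntS_succ k n S' m hm']
    unfold wt
    have hmT : m < Tc k n := by have h2 : Tc k n = Nn k n + 1 := rfl; omega
    by_cases hmem : (⟨m, hm'⟩ : Fin (Nn k n)) ∈ S'
    · have hin : (m : ZMod (Tc k n)) ∈ S'.image (embF k n) :=
        (mem_image_embF k n S' m hmT).2 ⟨hm', hmem⟩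
      rw [if_pos hin, if_pos hmem]
      push_cast; ring
    · have hout : ¬ ((m : ZMod (Tc k n)) ∈ S'.image (embF k n)) := by
        intro hc
        obtain ⟨h, hc'⟩ := (mem_image_embF k n S' m hmT).1 hc
        exact hmem hc'
      rw [if_neg hout, if_neg hmem]
      push_cast; ring

lemma goodZ_image_iff (S' : Finset (Fin (Nn k n))) (hS' : S'.card = n) :
    GoodZ k n (S'.image (embF k n)) ↔ CondS k n S' := by
  constructor
  · intro hg x hx
    have hxN : (x:ℕ) < Nn k n := x.isLt
    have := hg (x:ℕ) (by have h2 : Tc k n = Nn k n + 1 := rfl; omega)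
    rw [ps_image_embF k n S' _ (le_of_lt hxN)] at this
    have : ((x:ℕ):ℤ) ≤ (k+1) * (cntS k n S' (x:ℕ) : ℤ) := by omega
    have := this
    unfold cntS at this
    exact_mod_cast this
  · intro hc j hj
    have hjN : j ≤ Nn k n := by have h2 : Tc k n = Nn k n + 1 := rfl; omega
    rw [ps_image_embF k n S' j hjN]
    have key : j ≤ (k+1) * cntS k n S' j := by
      by_cases hex : ∃ y ∈ S', j ≤ (y:ℕ)
      · obtain ⟨y₀, hy₀S, hy₀⟩ := hex
        set F := S'.filter (fun y : Fin (Nn k n) => j ≤ (y:ℕ)) with hF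
        have hFne : F.Nonempty := ⟨y₀, Finset.mem_filter.2 ⟨hy₀S, hy₀⟩⟩
        set x := F.min' hFne with hx
        have hxF : x ∈ F := Finset.min'_mem _ _
        have hxS : x ∈ S' := (Finset.mem_filter.1 hxF).1
        have hjx : j ≤ (x:ℕ) := (Finset.mem_filter.1 hxF).2
        have hfeq : S'.filter (fun y : Fin (Nn k n) => (y:ℕ) < (x:ℕ)) = S'.filter (fun y : Fin (Nn k n) => (y:ℕ) < j) := by
          ext y
          simp only [Finset.mem_filter]
          constructor
          · rintro ⟨hyS, hlt⟩
            refine ⟨hyS, ?_⟩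
            by_contra hcon
            push_neg at hcon
            have hyF : y ∈ F := Finset.mem_filter.2 ⟨hyS, hcon⟩
            have := Finset.min'_le F y hyF
            rw [← hx] at this
            have : (x:ℕ) ≤ (y:ℕ) := this
            omega
          · rintro ⟨hyS, hlt⟩
            exact ⟨hyS, by omega⟩
        have := hc x hxS
        rw [hfeq] at this
        unfold cntS
        omega
      · push_neg at hex
        have : S'.filter (fun y : Fin (Nn k n) => (y:ℕ) < j) = S' := by
          apply Finset.filter_true_of_mem
          intro y hy
          have := hex y hy
          omega
        unfold cntS
        rw [this, hS']
        exact hjN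
    have key' : (j:ℤ) ≤ ((k:ℤ)+1) * (cntS k n S' j : ℤ) := by exact_mod_cast key
    omega

lemma goodZ_no_top (S : Finset (ZMod (Tc k n))) (hS : S.card = n) (hg : GoodZ k n S)
    (x : ZMod (Tc k n)) (hx : x ∈ S) : x.val < Nn k n := by
  by_contra hcon
  push_neg at hcon
  have hxv : x.val < Tc k n := ZMod.val_lt x
  have hxN : x.val = Nn k n := by have h2 : Tc k n = Nn k n + 1 := rfl; omega
  have h0 : ps k n S 0 = 0 := by simp [ps]
  have hT : ps k n S (0 + Tc k n) = ps k n S 0 - 1 := ps_period k n S hS 0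
  rw [h0, zero_add] at hT
  have hsplit : ps k n S (Nn k n + 1) = ps k n S (Nn k n) + wt k n S ((Nn k n : ℕ) : ZMod (Tc k n)) := by
    rw [ps_add]
    simp
  have hxcast : ((Nn k n : ℕ) : ZMod (Tc k n)) = x := by
    rw [← hxN, ZMod.natCast_zmod_val]
  have hwt : wt k n S ((Nn k n : ℕ) : ZMod (Tc k n)) = k := by
    unfold wt
    rw [hxcast, if_pos hx]
  have hps : 0 ≤ ps k n S (Nn k n) := hg _ (by have h2 : Tc k n = Nn k n + 1 := rfl; omega)
  have : ps k n S (Nn k n + 1) = -1 := by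
    have : Nn k n + 1 = Tc k n := rfl
    rw [this, hT]
    ring
  omega

lemma card_condS_eq :
    Nat.card {S' : Finset (Fin (Nn k n)) // S'.card = n ∧ CondS k n S'}
      = Nat.card {S : Finset (ZMod (Tc k n)) // S.card = n ∧ GoodZ k n S} := by
  classical
  apply Nat.card_eq_of_bijective (fun p => ⟨(p.1).image (embF k n),
    by rw [Finset.card_image_of_injective _ (embF_injective k n)]; exact p.2.1,
    (goodZ_image_iff k n p.1 p.2.1).2 p.2.2⟩)
  constructor
  · rintro ⟨S₁, h₁⟩ ⟨S₂, h₂⟩ h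
    have : S₁.image (embF k n) = S₂.image (embF k n) := congrArg Subtype.val h
    have : S₁ = S₂ := by
      ext y
      constructor
      · intro hy
        have : embF k n y ∈ S₂.image (embF k n) := by
          rw [← this]; exact Finset.mem_image_of_mem _ hy
        obtain ⟨z, hz, he⟩ := Finset.mem_image.1 this
        rwa [embF_injective k n he] at hz
      · intro hy
        have : embF k n y ∈ S₁.image (embF k n) := by
          rw [this]; exact Finset.mem_image_of_mem _ hy
        obtain ⟨z, hz, he⟩ := Finset.mem_image.1 this
        rwa [embF_injective k n he] at hz
    exact Subtype.ext this
  · rintro ⟨S, hcard, hgood⟩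
    set S' : Finset (Fin (Nn k n)) := Finset.univ.filter (fun y => embF k n y ∈ S) with hS'
    have himg : S'.image (embF k n) = S := by
      ext z
      constructor
      · intro hz
        obtain ⟨y, hy, he⟩ := Finset.mem_image.1 hz
        rw [← he]
        exact (Finset.mem_filter.1 hy).2
      · intro hz
        have hzv : z.val < Nn k n := goodZ_no_top k n S hcard hgood z hz
        have hze : embF k n ⟨z.val, hzv⟩ = z := by
          unfold embF
          exact ZMod.natCast_zmod_val z
        refine Finset.mem_image.2 ⟨⟨z.val, hzv⟩, ?_, hze⟩
        rw [hS']
        refine Finset.mem_filter.2 ⟨Finset.mem_univ _, ?_⟩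
        rw [hze]; exact hz
    have hcard' : S'.card = n := by
      rw [← Finset.card_image_of_injective S' (embF_injective k n), himg, hcard]
    have hcond : CondS k n S' := by
      apply (goodZ_image_iff k n S' hcard').1
      rw [himg]; exact hgood
    exact ⟨⟨S', hcard', hcond⟩, Subtype.ext himg⟩

section Perm

variable (k n : ℕ)

lemma card_compl_of (S' : Finset (Fin (Nn k n))) (h : S'.card = n) : S'ᶜ.card = k*n := by
  rw [Finset.card_compl, h, Fintype.card_fin]
  have h4 : Nn k n = k*n + n := by show (k+1)*n = _; ring
  omega

def sigmaS (S' : Finset (Fin (Nn k n))) (h : S'.card = n) : Fin n ↪o Fin (Nn k n) :=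
  S'.orderEmbOfFin h

def tauS (S' : Finset (Fin (Nn k n))) (h : S'.card = n) : Fin (k*n) ↪o Fin (Nn k n) :=
  S'ᶜ.orderEmbOfFin (card_compl_of k n S' h)

/-- the `Fin`-valued order condition equivalent to `CondS` -/
def CondR (S' : Finset (Fin (Nn k n))) (h : S'.card = n) : Prop :=
  ∀ t : Fin n, ∀ ht : k * (t:ℕ) < k*n,
    sigmaS k n S' h t < tauS k n S' h ⟨k * (t:ℕ), ht⟩

lemma filter_lt_eq_Iio {m : ℕ} (x : Fin m) :
    Finset.univ.filter (fun y : Fin m => y < x) = Finset.Iio x := by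
  ext y; simp

lemma count_below_sigma (S' : Finset (Fin (Nn k n))) (h : S'.card = n) (t : Fin n) :
    (S'.filter (fun y => y < sigmaS k n S' h t)).card = (t:ℕ) := by
  have himg : S'.filter (fun y => y < sigmaS k n S' h t)
      = Finset.image (fun s : Fin n => sigmaS k n S' h s) (Finset.univ.filter (fun s => s < t)) := by
    ext y
    simp only [Finset.mem_filter, Finset.mem_image, Finset.mem_univ, true_and]
    constructor
    · rintro ⟨hyS, hlt⟩
      have : y ∈ Set.range (S'.orderEmbOfFin h) := by
        rw [Finset.range_orderEmbOfFin]; exact hyS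
      obtain ⟨s, hs⟩ := this
      refine ⟨s, ?_, hs⟩
      have : sigmaS k n S' h s < sigmaS k n S' h t := by rw [show sigmaS k n S' h s = y from hs]; exact hlt
      exact (sigmaS k n S' h).strictMono.lt_iff_lt.1 this
    · rintro ⟨s, hst, rfl⟩
      exact ⟨Finset.orderEmbOfFin_mem _ _ _, (sigmaS k n S' h).strictMono hst⟩
  rw [himg, Finset.card_image_of_injective _ (sigmaS k n S' h).injective,
    filter_lt_eq_Iio, Fin.card_Iio]

lemma count_split (S' : Finset (Fin (Nn k n))) (x : Fin (Nn k n)) :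
    (S'.filter (fun y => y < x)).card + (S'ᶜ.filter (fun y => y < x)).card = (x:ℕ) := by
  classical
  have hu : S'.filter (fun y => y < x) ∪ S'ᶜ.filter (fun y => y < x)
      = Finset.univ.filter (fun y => y < x) := by
    rw [← Finset.filter_union, Finset.union_compl]
  have hd : Disjoint (S'.filter (fun y => y < x)) (S'ᶜ.filter (fun y => y < x)) :=
    Finset.disjoint_filter_filter disjoint_compl_right
  have := Finset.card_union_of_disjoint hd
  rw [hu, filter_lt_eq_Iio, Fin.card_Iio] at this
  omega

lemma condS_iff_condR (hk1 : 1 ≤ k) (S' : Finset (Fin (Nn k n))) (h : S'.card = n) :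
    CondS k n S' ↔ CondR k n S' h := by
  constructor
  · intro hc t ht
    set x := sigmaS k n S' h t with hx
    have hxS : x ∈ S' := Finset.orderEmbOfFin_mem _ _ _
    have hcnt : (S'.filter (fun y => y < x)).card = (t:ℕ) := count_below_sigma k n S' h t
    have hcond := hc x hxS
    have hfeq : S'.filter (fun y : Fin (Nn k n) => (y:ℕ) < (x:ℕ)) = S'.filter (fun y => y < x) := by
      apply Finset.filter_congr; intro y _; exact Iff.symm Fin.lt_def
    rw [hfeq, hcnt] at hcond
    -- hcond : (x:ℕ) ≤ (k+1) * t
    by_contra hcon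
    push_neg at hcon
    -- tauS ⟨k*t⟩ ≤ x, and they are distinct
    have hne : tauS k n S' h ⟨k*(t:ℕ), ht⟩ ≠ x := by
      intro he
      have h1 : tauS k n S' h ⟨k*(t:ℕ), ht⟩ ∈ S'ᶜ := Finset.orderEmbOfFin_mem _ _ _
      rw [he] at h1
      exact (Finset.mem_compl.1 h1) hxS
    have hlt : tauS k n S' h ⟨k*(t:ℕ), ht⟩ < x := lt_of_le_of_ne hcon hne
    -- then S'ᶜ has at least k*t+1 elements below x
    have hsub : Finset.image (fun s => tauS k n S' h s)
          (Finset.univ.filter (fun s : Fin (k*n) => s ≤ ⟨k*(t:ℕ), ht⟩))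
        ⊆ S'ᶜ.filter (fun y => y < x) := by
      intro y hy
      obtain ⟨s, hs, rfl⟩ := Finset.mem_image.1 hy
      have hsle : s ≤ ⟨k*(t:ℕ), ht⟩ := (Finset.mem_filter.1 hs).2
      refine Finset.mem_filter.2 ⟨Finset.orderEmbOfFin_mem _ _ _, ?_⟩
      exact lt_of_le_of_lt ((tauS k n S' h).monotone hsle) hlt
    have hcard1 : (Finset.image (fun s => tauS k n S' h s)
          (Finset.univ.filter (fun s : Fin (k*n) => s ≤ ⟨k*(t:ℕ), ht⟩))).card = k*(t:ℕ)+1 := by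
      rw [Finset.card_image_of_injective _ (tauS k n S' h).injective]
      have : Finset.univ.filter (fun s : Fin (k*n) => s ≤ ⟨k*(t:ℕ), ht⟩)
          = Finset.Iic (⟨k*(t:ℕ), ht⟩ : Fin (k*n)) := by ext y; simp
      rw [this, Fin.card_Iic]
    have hle := Finset.card_le_card hsub
    rw [hcard1] at hle
    have hsplit := count_split k n S' x
    rw [hcnt] at hsplit
    -- (x:ℕ) = t + complbelow ≥ t + kt+1, but x ≤ (k+1)t
    have : (k+1) * (t:ℕ) = k*(t:ℕ) + (t:ℕ) := by ring
    omega
  · intro hc x hxS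
    have : x ∈ Set.range (S'.orderEmbOfFin h) := by
      rw [Finset.range_orderEmbOfFin]; exact hxS
    obtain ⟨t, hts⟩ := this
    have hxeq : sigmaS k n S' h t = x := hts
    have hcnt : (S'.filter (fun y => y < x)).card = (t:ℕ) := by
      rw [← hxeq]; exact count_below_sigma k n S' h t
    have hfeq : S'.filter (fun y : Fin (Nn k n) => (y:ℕ) < (x:ℕ)) = S'.filter (fun y => y < x) := by
      apply Finset.filter_congr; intro y _; exact Iff.symm Fin.lt_def
    rw [hfeq, hcnt]
    have ht : k * (t:ℕ) < k*n := by
      have h5 : k*((t:ℕ)+1) ≤ k*n := Nat.mul_le_mul_left k t.isLt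
      have h6 : k*((t:ℕ)+1) = k*(t:ℕ) + k := by ring
      omega
    have hlt : x < tauS k n S' h ⟨k*(t:ℕ), ht⟩ := by rw [← hxeq]; exact hc t ht
    have hsub : S'ᶜ.filter (fun y => y < x) ⊆ Finset.image (fun s => tauS k n S' h s)
          (Finset.univ.filter (fun s : Fin (k*n) => s < ⟨k*(t:ℕ), ht⟩)) := by
      intro y hy
      obtain ⟨hyC, hyx⟩ := Finset.mem_filter.1 hy
      have : y ∈ Set.range (S'ᶜ.orderEmbOfFin (card_compl_of k n S' h)) := by
        rw [Finset.range_orderEmbOfFin]; exact hyC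
      obtain ⟨s, rfl⟩ := this
      refine Finset.mem_image.2 ⟨s, Finset.mem_filter.2 ⟨Finset.mem_univ _, ?_⟩, rfl⟩
      have : tauS k n S' h s < tauS k n S' h ⟨k*(t:ℕ), ht⟩ := lt_trans hyx hlt
      exact (tauS k n S' h).strictMono.lt_iff_lt.1 this
    have hcard1 : (Finset.image (fun s => tauS k n S' h s)
          (Finset.univ.filter (fun s : Fin (k*n) => s < ⟨k*(t:ℕ), ht⟩))).card = k*(t:ℕ) := by
      rw [Finset.card_image_of_injective _ (tauS k n S' h).injective, filter_lt_eq_Iio, Fin.card_Iio]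
    have hle := Finset.card_le_card hsub
    rw [hcard1] at hle
    have hsplit := count_split k n S' x
    rw [hcnt] at hsplit
    have h7 : (k+1) * (t:ℕ) = k*(t:ℕ) + (t:ℕ) := by ring
    omega

end Perm

section Perm2

variable (k n : ℕ)

lemma Nn_comm : Nn k n = n*(k+1) := by show (k+1)*n = _; ring

lemma div_lt_n (p : Fin (Nn k n)) : (p:ℕ)/(k+1) < n := by
  have hp := p.isLt
  rw [Nat.div_lt_iff_lt_mul (by omega : 0 < k+1)]
  have h2 := Nn_comm k n
  omega

def leafIdx (k p : ℕ) : ℕ := k * (p/(k+1)) + p % (k+1) - 1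

lemma mod_le_k (p : ℕ) : p % (k+1) ≤ k := by
  have := Nat.mod_lt p (by omega : 0 < k+1)
  omega

lemma leafIdx_lt (p : Fin (Nn k n)) (hp : (p:ℕ) % (k+1) ≠ 0) : leafIdx k (p:ℕ) < k*n := by
  have hj2 := mod_le_k k (p:ℕ)
  have hi : (p:ℕ)/(k+1) < n := div_lt_n k n p
  have h1 : k*((p:ℕ)/(k+1)+1) ≤ k*n := Nat.mul_le_mul_left k hi
  have h2 : k*((p:ℕ)/(k+1)+1) = k*((p:ℕ)/(k+1)) + k := by ring
  unfold leafIdx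
  omega

lemma k_pos_of_leaf (p : ℕ) (hp : p % (k+1) ≠ 0) : 1 ≤ k := by
  have := mod_le_k k p
  omega

lemma leafIdx_div (p : ℕ) (hp : p % (k+1) ≠ 0) :
    leafIdx k p / k = p/(k+1) ∧ leafIdx k p % k = p % (k+1) - 1 := by
  have hk1 : 1 ≤ k := k_pos_of_leaf k p hp
  have hj2 := mod_le_k k p
  have he : leafIdx k p = k * (p/(k+1)) + (p % (k+1) - 1) := by unfold leafIdx; omega
  have hlt : p % (k+1) - 1 < k := by omega
  constructor
  · rw [he, Nat.mul_add_div hk1, Nat.div_eq_of_lt hlt]; omega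
  · rw [he, Nat.mul_add_mod, Nat.mod_eq_of_lt hlt]


lemma pos_eq_of_divmod (p q : ℕ) (h1 : p/(k+1) = q/(k+1)) (h2 : p%(k+1) = q%(k+1)) : p = q := by
  have hp := Nat.div_add_mod p (k+1)
  have hq := Nat.div_add_mod q (k+1)
  rw [h1, h2] at hp
  omega

def toFunS (S' : Finset (Fin (Nn k n))) (h : S'.card = n) : Fin (Nn k n) → Fin (Nn k n) :=
  fun p =>
    if hp : (p:ℕ) % (k+1) = 0 then
      sigmaS k n S' h (Fin.rev ⟨(p:ℕ)/(k+1), div_lt_n k n p⟩)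
    else
      tauS k n S' h (Fin.rev ⟨leafIdx k (p:ℕ), leafIdx_lt k n p hp⟩)

lemma toFunS_injective (S' : Finset (Fin (Nn k n))) (h : S'.card = n) :
    Function.Injective (toFunS k n S' h) := by
  intro p q hpq
  unfold toFunS at hpq
  by_cases hp : (p:ℕ) % (k+1) = 0 <;> by_cases hq : (q:ℕ) % (k+1) = 0
  · rw [dif_pos hp, dif_pos hq] at hpq
    have := (sigmaS k n S' h).injective hpq
    have := Fin.rev_injective this
    have hdiv : (p:ℕ)/(k+1) = (q:ℕ)/(k+1) := congrArg Fin.val this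
    exact Fin.ext (pos_eq_of_divmod k p q hdiv (by omega))
  · rw [dif_pos hp, dif_neg hq] at hpq
    exfalso
    have h1 : sigmaS k n S' h (Fin.rev ⟨(p:ℕ)/(k+1), div_lt_n k n p⟩) ∈ S' :=
      Finset.orderEmbOfFin_mem _ _ _
    have h2 : tauS k n S' h (Fin.rev ⟨leafIdx k (q:ℕ), leafIdx_lt k n q hq⟩) ∈ S'ᶜ :=
      Finset.orderEmbOfFin_mem _ _ _
    rw [← hpq] at h2
    exact (Finset.mem_compl.1 h2) h1
  · rw [dif_neg hp, dif_pos hq] at hpq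
    exfalso
    have h1 : sigmaS k n S' h (Fin.rev ⟨(q:ℕ)/(k+1), div_lt_n k n q⟩) ∈ S' :=
      Finset.orderEmbOfFin_mem _ _ _
    have h2 : tauS k n S' h (Fin.rev ⟨leafIdx k (p:ℕ), leafIdx_lt k n p hp⟩) ∈ S'ᶜ :=
      Finset.orderEmbOfFin_mem _ _ _
    rw [hpq] at h2
    exact (Finset.mem_compl.1 h2) h1
  · rw [dif_neg hp, dif_neg hq] at hpq
    have := (tauS k n S' h).injective hpq
    have := Fin.rev_injective this
    have hidx : leafIdx k (p:ℕ) = leafIdx k (q:ℕ) := congrArg Fin.val this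
    have hdp := leafIdx_div k (p:ℕ) hp
    have hdq := leafIdx_div k (q:ℕ) hq
    have hdiv : (p:ℕ)/(k+1) = (q:ℕ)/(k+1) := by
      rw [← hdp.1, ← hdq.1, hidx]
    have hmod : (p:ℕ)%(k+1) = (q:ℕ)%(k+1) := by
      have := hdp.2
      have := hdq.2
      have h1 : (p:ℕ)%(k+1) - 1 = (q:ℕ)%(k+1) - 1 := by
        rw [← hdp.2, ← hdq.2, hidx]
      omega
    exact Fin.ext (pos_eq_of_divmod k p q hdiv hmod)

noncomputable def toPermS (S' : Finset (Fin (Nn k n))) (h : S'.card = n) :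
    Equiv.Perm (Fin (Nn k n)) :=
  Equiv.ofBijective (toFunS k n S' h)
    ((Finite.injective_iff_bijective).1 (toFunS_injective k n S' h))

lemma toPermS_apply (S' : Finset (Fin (Nn k n))) (h : S'.card = n) (p : Fin (Nn k n)) :
    toPermS k n S' h p = toFunS k n S' h p := rfl

lemma toPermS_root (S' : Finset (Fin (Nn k n))) (h : S'.card = n) (p : Fin (Nn k n))
    (hp : (p:ℕ) % (k+1) = 0) :
    toPermS k n S' h p = sigmaS k n S' h (Fin.rev ⟨(p:ℕ)/(k+1), div_lt_n k n p⟩) := by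
  rw [toPermS_apply]; unfold toFunS; rw [dif_pos hp]

lemma toPermS_leaf (S' : Finset (Fin (Nn k n))) (h : S'.card = n) (p : Fin (Nn k n))
    (hp : (p:ℕ) % (k+1) ≠ 0) :
    toPermS k n S' h p = tauS k n S' h (Fin.rev ⟨leafIdx k (p:ℕ), leafIdx_lt k n p hp⟩) := by
  rw [toPermS_apply]; unfold toFunS; rw [dif_neg hp]

end Perm2

section PermB

variable (k n : ℕ)

lemma contains123_of {m : ℕ} (π : Equiv.Perm (Fin m)) (p q r : Fin m)
    (hpq : p < q) (hqr : q < r) (h1 : π p < π q) (h2 : π q < π r) :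
    Contains π (![0, 1, 2] : Fin 3 → Fin 3) := by
  refine ⟨![p, q, r], ?_, ?_⟩
  · rw [Fin.strictMono_iff_lt_succ]
    intro i
    fin_cases i <;> simp [hpq, hqr]
  · intro a b
    fin_cases a <;> fin_cases b <;>
      simp only [Fin.isValue, Matrix.cons_val_zero, Matrix.cons_val_one, Matrix.head_cons,
        Matrix.cons_val_two, Matrix.tail_cons] <;>
      first
      | exact iff_of_false (lt_irrefl _) (by decide)
      | exact iff_of_true h1 (by decide)
      | exact iff_of_true h2 (by decide)
      | exact iff_of_true (h1.trans h2) (by decide)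
      | exact iff_of_false (not_lt.2 h1.le) (by decide)
      | exact iff_of_false (not_lt.2 h2.le) (by decide)
      | exact iff_of_false (not_lt.2 (h1.trans h2).le) (by decide)

lemma toPermS_shrub (S' : Finset (Fin (Nn k n))) (h : S'.card = n)
    (hcond : CondR k n S' h) : IsKShrubForest k n (toPermS k n S' h) := by
  intro i j hi hj1 hj2
  have hk1 : 1 ≤ k := le_trans hj1 hj2
  have hpmod : (((k+1)*i : ℕ)) % (k+1) = 0 := Nat.mul_mod_right _ _
  have hqmod : (((k+1)*i + j : ℕ)) % (k+1) = j := by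
    rw [Nat.mul_add_mod]; exact Nat.mod_eq_of_lt (by omega)
  rw [toPermS_root k n S' h ⟨(k+1)*i, root_lt hi⟩ hpmod,
    toPermS_leaf k n S' h ⟨(k+1)*i + j, leaf_lt hi hj2⟩ (by
      show ((k+1)*i + j) % (k+1) ≠ 0
      omega)]
  have hpdiv : ((k+1)*i) / (k+1) = i := Nat.mul_div_cancel_left i (by omega)
  have hqdiv : ((k+1)*i + j) / (k+1) = i := by
    rw [Nat.mul_add_div (by omega), Nat.div_eq_of_lt (by omega : j < k+1)]
    omega
  have hqidx : leafIdx k ((k+1)*i + j) = k*i + j - 1 := by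
    unfold leafIdx
    rw [hqdiv, hqmod]
  obtain ⟨d', hd'⟩ : ∃ d', n = i + d' + 1 := ⟨n - i - 1, by omega⟩
  have ekn : k*n = k*i + k*d' + k := by rw [hd']; ring
  set I : Fin n := ⟨((k+1)*i : ℕ)/(k+1), div_lt_n k n ⟨(k+1)*i, root_lt hi⟩⟩ with hI
  set J : Fin (k*n) := ⟨leafIdx k ((k+1)*i + j),
    leafIdx_lt k n ⟨(k+1)*i + j, leaf_lt hi hj2⟩ (by show ((k+1)*i + j) % (k+1) ≠ 0; omega)⟩ with hJ
  have hIv : (I:ℕ) = i := hpdiv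
  have hJv : (J:ℕ) = k*i + j - 1 := hqidx
  have hrevI : ((Fin.rev I : Fin n) : ℕ) = d' := by
    rw [Fin.val_rev, hIv]; omega
  have hrevJ : ((Fin.rev J : Fin (k*n)) : ℕ) = k*n - (k*i + j) := by
    rw [Fin.val_rev, hJv]; omega
  have hbound : k * ((Fin.rev I : Fin n) : ℕ) < k*n := by rw [hrevI]; omega
  have hCR := hcond (Fin.rev I) hbound
  refine lt_of_lt_of_le hCR ((tauS k n S' h).monotone ?_)
  show k * ((Fin.rev I : Fin n) : ℕ) ≤ ((Fin.rev J : Fin (k*n)) : ℕ)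
  rw [hrevI, hrevJ]
  omega

lemma toPermS_desc (S' : Finset (Fin (Nn k n))) (h : S'.card = n) (p q : Fin (Nn k n))
    (hlt : p < q) (hsame : ((p:ℕ)%(k+1) = 0 ↔ (q:ℕ)%(k+1) = 0)) :
    toPermS k n S' h q < toPermS k n S' h p := by
  have hltv : (p:ℕ) < (q:ℕ) := hlt
  by_cases hp : (p:ℕ)%(k+1) = 0
  · have hq : (q:ℕ)%(k+1) = 0 := hsame.1 hp
    rw [toPermS_root k n S' h p hp, toPermS_root k n S' h q hq]
    have hdp := Nat.div_add_mod (p:ℕ) (k+1)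
    have hdq := Nat.div_add_mod (q:ℕ) (k+1)
    have hdvlt : (p:ℕ)/(k+1) < (q:ℕ)/(k+1) := by
      by_contra hc
      push_neg at hc
      have := Nat.mul_le_mul_left (k+1) hc
      omega
    exact (sigmaS k n S' h).strictMono (Fin.rev_lt_rev.2 (Fin.mk_lt_mk.2 hdvlt))
  · have hq : ¬ (q:ℕ)%(k+1) = 0 := fun hc => hp (hsame.2 hc)
    rw [toPermS_leaf k n S' h p hp, toPermS_leaf k n S' h q hq]
    have hdp := Nat.div_add_mod (p:ℕ) (k+1)
    have hdq := Nat.div_add_mod (q:ℕ) (k+1)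
    have hdle : (p:ℕ)/(k+1) ≤ (q:ℕ)/(k+1) := Nat.div_le_div_right (le_of_lt hltv)
    have hidxlt : leafIdx k (p:ℕ) < leafIdx k (q:ℕ) := by
      unfold leafIdx
      rcases eq_or_lt_of_le hdle with heq | hlt'
      · rw [heq]
        rw [heq] at hdp
        have hjlt : (p:ℕ)%(k+1) < (q:ℕ)%(k+1) := by omega
        have := mod_le_k k (p:ℕ)
        omega
      · have h1 : k*((p:ℕ)/(k+1)+1) ≤ k*((q:ℕ)/(k+1)) := Nat.mul_le_mul_left k hlt'
        have h2 : k*((p:ℕ)/(k+1)+1) = k*((p:ℕ)/(k+1)) + k := by ring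
        have := mod_le_k k (p:ℕ)
        have := mod_le_k k (q:ℕ)
        omega
    exact (tauS k n S' h).strictMono (Fin.rev_lt_rev.2 (Fin.mk_lt_mk.2 hidxlt))

lemma toPermS_avoids (S' : Finset (Fin (Nn k n))) (h : S'.card = n) :
    Avoids (toPermS k n S' h) (![0, 1, 2] : Fin 3 → Fin 3) := by
  rintro ⟨f, hmono, hiff⟩
  have hf01 : f 0 < f 1 := hmono (by decide : (0:Fin 3) < 1)
  have hf12 : f 1 < f 2 := hmono (by decide : (1:Fin 3) < 2)
  have hf02 : f 0 < f 2 := hmono (by decide : (0:Fin 3) < 2)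
  have v01 : toPermS k n S' h (f 0) < toPermS k n S' h (f 1) := (hiff 0 1).2 (by decide)
  have v12 : toPermS k n S' h (f 1) < toPermS k n S' h (f 2) := (hiff 1 2).2 (by decide)
  have v02 : toPermS k n S' h (f 0) < toPermS k n S' h (f 2) := (hiff 0 2).2 (by decide)
  by_cases h0 : ((f 0 : Fin (Nn k n)) : ℕ) % (k+1) = 0 <;>
    by_cases h1 : ((f 1 : Fin (Nn k n)) : ℕ) % (k+1) = 0 <;>
    by_cases h2 : ((f 2 : Fin (Nn k n)) : ℕ) % (k+1) = 0
  · exact absurd v01 (not_lt.2 (toPermS_desc k n S' h _ _ hf01 (iff_of_true h0 h1)).le)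
  · exact absurd v01 (not_lt.2 (toPermS_desc k n S' h _ _ hf01 (iff_of_true h0 h1)).le)
  · exact absurd v02 (not_lt.2 (toPermS_desc k n S' h _ _ hf02 (iff_of_true h0 h2)).le)
  · exact absurd v12 (not_lt.2 (toPermS_desc k n S' h _ _ hf12 (iff_of_false h1 h2)).le)
  · exact absurd v12 (not_lt.2 (toPermS_desc k n S' h _ _ hf12 (iff_of_true h1 h2)).le)
  · exact absurd v02 (not_lt.2 (toPermS_desc k n S' h _ _ hf02 (iff_of_false h0 h2)).le)
  · exact absurd v01 (not_lt.2 (toPermS_desc k n S' h _ _ hf01 (iff_of_false h0 h1)).le)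
  · exact absurd v01 (not_lt.2 (toPermS_desc k n S' h _ _ hf01 (iff_of_false h0 h1)).le)

end PermB

section PermC

variable (k n : ℕ)

def rootPos (i : Fin n) : Fin (Nn k n) := ⟨(k+1)*(i:ℕ), root_lt i.isLt⟩

lemma mdiv_lt (m : Fin (k*n)) (hk1 : 1 ≤ k) : (m:ℕ)/k < n := by
  rw [Nat.div_lt_iff_lt_mul (by omega : 0 < k)]
  have := m.isLt
  have h2 : k*n = n*k := by ring
  omega

lemma mmod_le (m : Fin (k*n)) (hk1 : 1 ≤ k) : (m:ℕ)%k + 1 ≤ k := by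
  have := Nat.mod_lt (m:ℕ) (by omega : 0 < k)
  omega

def leafPosM (hk1 : 1 ≤ k) (m : Fin (k*n)) : Fin (Nn k n) :=
  ⟨(k+1)*((m:ℕ)/k) + ((m:ℕ)%k + 1), leaf_lt (mdiv_lt k n m hk1) (mmod_le k n m hk1)⟩

lemma rootPos_injective : Function.Injective (rootPos k n) := by
  intro a b hab
  have := congrArg Fin.val hab
  have h1 : (k+1)*(a:ℕ) = (k+1)*(b:ℕ) := this
  exact Fin.ext (Nat.eq_of_mul_eq_mul_left (by omega) h1)

lemma leafPosM_strictMono (hk1 : 1 ≤ k) : StrictMono (leafPosM k n hk1) := by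
  intro a b hab
  show ((leafPosM k n hk1 a) : ℕ) < ((leafPosM k n hk1 b) : ℕ)
  show (k+1)*((a:ℕ)/k) + ((a:ℕ)%k + 1) < (k+1)*((b:ℕ)/k) + ((b:ℕ)%k + 1)
  have habv : (a:ℕ) < (b:ℕ) := hab
  have hdle : (a:ℕ)/k ≤ (b:ℕ)/k := Nat.div_le_div_right (le_of_lt habv)
  have hda := Nat.div_add_mod (a:ℕ) k
  have hdb := Nat.div_add_mod (b:ℕ) k
  rcases eq_or_lt_of_le hdle with heq | hlt'
  · rw [heq]
    rw [heq] at hda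
    have h1 : k*((b:ℕ)/k) = k*((b:ℕ)/k) := rfl
    omega
  · have h1 : (k+1)*((a:ℕ)/k+1) ≤ (k+1)*((b:ℕ)/k) := Nat.mul_le_mul_left (k+1) hlt'
    have h2 : (k+1)*((a:ℕ)/k+1) = (k+1)*((a:ℕ)/k) + (k+1) := by ring
    have h3 := Nat.mod_lt (a:ℕ) (show 0 < k by omega)
    omega

variable (π : Equiv.Perm (Fin (Nn k n)))

def rootFinset : Finset (Fin (Nn k n)) :=
  Finset.image (fun i : Fin n => π (rootPos k n i)) Finset.univ

lemma rootFinset_card : (rootFinset k n π).card = n := by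
  show (Finset.image (fun i : Fin n => π (rootPos k n i)) Finset.univ).card = n
  rw [Finset.card_image_of_injective _
    (fun a b hab => rootPos_injective k n (π.injective hab)),
    Finset.card_univ, Fintype.card_fin]

variable (hsh : IsKShrubForest k n π) (hav : Avoids π (![0, 1, 2] : Fin 3 → Fin 3))
variable (hk1 : 1 ≤ k)

include hsh hav hk1 in
lemma roots_anti : ∀ i₁ i₂ : Fin n, i₁ < i₂ → π (rootPos k n i₂) < π (rootPos k n i₁) := by
  intro i₁ i₂ hlt
  have hposlt : rootPos k n i₁ < rootPos k n i₂ := by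
    show (k+1)*(i₁:ℕ) < (k+1)*(i₂:ℕ)
    have h1 : (k+1)*((i₁:ℕ)+1) ≤ (k+1)*(i₂:ℕ) := Nat.mul_le_mul_left (k+1) hlt
    have h2 : (k+1)*((i₁:ℕ)+1) = (k+1)*(i₁:ℕ) + (k+1) := by ring
    omega
  rcases lt_trichotomy (π (rootPos k n i₂)) (π (rootPos k n i₁)) with h | h | h
  · exact h
  · exfalso
    exact (ne_of_lt hlt) (rootPos_injective k n (π.injective h)).symm
  · exfalso
    have hleaf := hsh (i₂:ℕ) 1 i₂.isLt le_rfl hk1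
    exact hav (contains123_of π (rootPos k n i₁) (rootPos k n i₂)
      ⟨(k+1)*(i₂:ℕ) + 1, leaf_lt i₂.isLt hk1⟩ hposlt
      (by show ((k+1)*(i₂:ℕ) : ℕ) < (k+1)*(i₂:ℕ) + 1; omega) h hleaf)

end PermC

section PermD

variable (k n : ℕ) (π : Equiv.Perm (Fin (Nn k n)))
variable (hsh : IsKShrubForest k n π) (hav : Avoids π (![0, 1, 2] : Fin 3 → Fin 3))
variable (hk1 : 1 ≤ k)

include hsh hav hk1 in
lemma leaves_anti : ∀ m₁ m₂ : Fin (k*n), m₁ < m₂ →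
    π (leafPosM k n hk1 m₂) < π (leafPosM k n hk1 m₁) := by
  intro m₁ m₂ hlt
  have hposlt := leafPosM_strictMono k n hk1 hlt
  rcases lt_trichotomy (π (leafPosM k n hk1 m₂)) (π (leafPosM k n hk1 m₁)) with h | h | h
  · exact h
  · exfalso
    exact (ne_of_lt hlt) ((leafPosM_strictMono k n hk1).injective (π.injective h)).symm
  · exfalso
    have hroot := hsh ((m₁:ℕ)/k) ((m₁:ℕ)%k + 1) (mdiv_lt k n m₁ hk1) (by omega)
      (mmod_le k n m₁ hk1)
    exact hav (contains123_of π (rootPos k n ⟨(m₁:ℕ)/k, mdiv_lt k n m₁ hk1⟩)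
      (leafPosM k n hk1 m₁) (leafPosM k n hk1 m₂)
      (by show ((k+1)*((m₁:ℕ)/k) : ℕ) < (k+1)*((m₁:ℕ)/k) + ((m₁:ℕ)%k + 1); omega)
      hposlt hroot h)

include hsh hav hk1 in
lemma R_eq_sigma : ∀ i : Fin n, π (rootPos k n i)
    = sigmaS k n (rootFinset k n π) (rootFinset_card k n π) (Fin.rev i) := by
  have huniq := Finset.orderEmbOfFin_unique (rootFinset_card k n π)
    (f := fun a : Fin n => π (rootPos k n (Fin.rev a)))
    (fun a => Finset.mem_image.2 ⟨Fin.rev a, Finset.mem_univ _, rfl⟩)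
    (fun a b hab => roots_anti k n π hsh hav hk1 (Fin.rev b) (Fin.rev a) (Fin.rev_lt_rev.2 hab))
  intro i
  have := congrFun huniq (Fin.rev i)
  rw [Fin.rev_rev] at this
  exact this

include hsh hav hk1 in
lemma L_eq_tau : ∀ m : Fin (k*n), π (leafPosM k n hk1 m)
    = tauS k n (rootFinset k n π) (rootFinset_card k n π) (Fin.rev m) := by
  have hmem : ∀ a : Fin (k*n), π (leafPosM k n hk1 a) ∈ (rootFinset k n π)ᶜ := by
    intro a
    rw [Finset.mem_compl]
    intro hc
    obtain ⟨i, -, he⟩ := Finset.mem_image.1 hc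
    have hpos : rootPos k n i = leafPosM k n hk1 a := π.injective he
    have hval : (k+1)*(i:ℕ) = (k+1)*((a:ℕ)/k) + ((a:ℕ)%k + 1) := congrArg Fin.val hpos
    have hmod := congrArg (· % (k+1)) hval
    simp only [Nat.mul_mod_right, Nat.mul_add_mod] at hmod
    have : ((a:ℕ)%k + 1) % (k+1) = (a:ℕ)%k + 1 :=
      Nat.mod_eq_of_lt (by have := mmod_le k n a hk1; omega)
    omega
  have huniq := Finset.orderEmbOfFin_unique (card_compl_of k n _ (rootFinset_card k n π))
    (f := fun a : Fin (k*n) => π (leafPosM k n hk1 (Fin.rev a)))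
    (fun a => hmem _)
    (fun a b hab => leaves_anti k n π hsh hav hk1 (Fin.rev b) (Fin.rev a) (Fin.rev_lt_rev.2 hab))
  intro m
  have := congrFun huniq (Fin.rev m)
  rw [Fin.rev_rev] at this
  exact this

include hsh hav hk1 in
lemma condR_rootFinset : CondR k n (rootFinset k n π) (rootFinset_card k n π) := by
  intro t ht
  have hσ : π (rootPos k n (Fin.rev t))
      = sigmaS k n (rootFinset k n π) (rootFinset_card k n π) t := by
    rw [R_eq_sigma k n π hsh hav hk1 (Fin.rev t), Fin.rev_rev]
  have hτ : π (leafPosM k n hk1 (Fin.rev ⟨k*(t:ℕ), ht⟩))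
      = tauS k n (rootFinset k n π) (rootFinset_card k n π) ⟨k*(t:ℕ), ht⟩ := by
    rw [L_eq_tau k n π hsh hav hk1 (Fin.rev ⟨k*(t:ℕ), ht⟩), Fin.rev_rev]
  rw [← hσ, ← hτ]
  obtain ⟨d', hd'⟩ : ∃ d', n = (t:ℕ) + d' + 1 := ⟨n - (t:ℕ) - 1, by have := t.isLt; omega⟩
  have ekn : k*n = k*(t:ℕ) + k*d' + k := by
    have h := congrArg (fun z => k * z) hd'
    simp only [Nat.mul_add, Nat.mul_one] at h
    omega
  have hdn : d' < n := by omega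
  have ha : ((Fin.rev (⟨k*(t:ℕ), ht⟩ : Fin (k*n))) : ℕ) = k*d' + (k-1) := by
    rw [Fin.val_rev]
    show k*n - (k*(t:ℕ)+1) = k*d' + (k-1)
    omega
  have hadiv : ((Fin.rev (⟨k*(t:ℕ), ht⟩ : Fin (k*n))) : ℕ)/k = d' := by
    rw [ha, Nat.mul_add_div (by omega), Nat.div_eq_of_lt (by omega)]; omega
  have hamod : ((Fin.rev (⟨k*(t:ℕ), ht⟩ : Fin (k*n))) : ℕ)%k = k-1 := by
    rw [ha, Nat.mul_add_mod, Nat.mod_eq_of_lt (by omega)]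
  have hrevt : ((Fin.rev t : Fin n) : ℕ) = d' := by
    rw [Fin.val_rev]; omega
  have e1 : rootPos k n (Fin.rev t) = ⟨(k+1)*d', root_lt hdn⟩ := by
    apply Fin.ext
    show (k+1)*((Fin.rev t : Fin n):ℕ) = (k+1)*d'
    rw [hrevt]
  have e2 : leafPosM k n hk1 (Fin.rev ⟨k*(t:ℕ), ht⟩) = ⟨(k+1)*d' + k, leaf_lt hdn le_rfl⟩ := by
    apply Fin.ext
    show (k+1)*(((Fin.rev (⟨k*(t:ℕ), ht⟩ : Fin (k*n))) : ℕ)/k)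
        + (((Fin.rev (⟨k*(t:ℕ), ht⟩ : Fin (k*n))) : ℕ)%k + 1) = (k+1)*d' + k
    rw [hadiv, hamod]
    omega
  rw [e1, e2]
  exact hsh d' k hdn hk1 le_rfl

include hsh hav hk1 in
lemma toPermS_rootFinset : toPermS k n (rootFinset k n π) (rootFinset_card k n π) = π := by
  apply Equiv.ext
  intro p
  by_cases hp : (p:ℕ) % (k+1) = 0
  · rw [toPermS_root k n _ _ p hp]
    have hIp : rootPos k n ⟨(p:ℕ)/(k+1), div_lt_n k n p⟩ = p := by
      apply Fin.ext
      show (k+1)*((p:ℕ)/(k+1)) = (p:ℕ)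
      have := Nat.div_add_mod (p:ℕ) (k+1)
      omega
    rw [← R_eq_sigma k n π hsh hav hk1 ⟨(p:ℕ)/(k+1), div_lt_n k n p⟩, hIp]
  · rw [toPermS_leaf k n _ _ p hp]
    have hd := leafIdx_div k (p:ℕ) hp
    have hJp : leafPosM k n hk1 ⟨leafIdx k (p:ℕ), leafIdx_lt k n p hp⟩ = p := by
      apply Fin.ext
      show (k+1)*((leafIdx k (p:ℕ))/k) + ((leafIdx k (p:ℕ))%k + 1) = (p:ℕ)
      rw [hd.1, hd.2]
      have := Nat.div_add_mod (p:ℕ) (k+1)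
      have hp1 : 1 ≤ (p:ℕ)%(k+1) := by omega
      omega
    rw [← L_eq_tau k n π hsh hav hk1 ⟨leafIdx k (p:ℕ), leafIdx_lt k n p hp⟩, hJp]

end PermD

section PermE

variable (k n : ℕ)

lemma rootFinset_toPermS (S' : Finset (Fin (Nn k n))) (h : S'.card = n) :
    rootFinset k n (toPermS k n S' h) = S' := by
  have he : ∀ i : Fin n, toPermS k n S' h (rootPos k n i) = sigmaS k n S' h (Fin.rev i) := by
    intro i
    have hmod : ((rootPos k n i : Fin (Nn k n)) : ℕ) % (k+1) = 0 := Nat.mul_mod_right _ _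
    rw [toPermS_root k n S' h _ hmod]
    congr 1
    apply congrArg
    apply Fin.ext
    show ((k+1)*(i:ℕ))/(k+1) = (i:ℕ)
    exact Nat.mul_div_cancel_left _ (by omega)
  ext x
  constructor
  · intro hx
    obtain ⟨i, -, rfl⟩ := Finset.mem_image.1 hx
    rw [he]
    exact Finset.orderEmbOfFin_mem _ _ _
  · intro hx
    have : x ∈ Set.range (S'.orderEmbOfFin h) := by
      rw [Finset.range_orderEmbOfFin]; exact hx
    obtain ⟨s, hs⟩ := this
    refine Finset.mem_image.2 ⟨Fin.rev s, Finset.mem_univ _, ?_⟩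
    rw [he, Fin.rev_rev]
    exact hs

noncomputable def permEquiv (hk1 : 1 ≤ k) :
    {π : Equiv.Perm (Fin (Nn k n)) // IsKShrubForest k n π ∧ Avoids π (![0, 1, 2] : Fin 3 → Fin 3)}
      ≃ {S' : Finset (Fin (Nn k n)) // S'.card = n ∧ CondS k n S'} where
  toFun := fun p => ⟨rootFinset k n p.1, rootFinset_card k n p.1,
    (condS_iff_condR k n hk1 _ (rootFinset_card k n p.1)).2
      (condR_rootFinset k n p.1 p.2.1 p.2.2 hk1)⟩
  invFun := fun s => ⟨toPermS k n s.1 s.2.1,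
    toPermS_shrub k n s.1 s.2.1 ((condS_iff_condR k n hk1 s.1 s.2.1).1 s.2.2),
    toPermS_avoids k n s.1 s.2.1⟩
  left_inv := fun p => by
    apply Subtype.ext
    show toPermS k n (rootFinset k n p.1) (rootFinset_card k n p.1) = p.1
    exact toPermS_rootFinset k n p.1 p.2.1 p.2.2 hk1
  right_inv := fun s => by
    apply Subtype.ext
    show rootFinset k n (toPermS k n s.1 s.2.1) = s.1
    exact rootFinset_toPermS k n s.1 s.2.1

end PermE

section Final

variable (k n : ℕ)

lemma choose_identity :
    (Tc k n) * ((Nn k n).choose n) = ((Tc k n).choose n) * (k*n + 1) := by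
  have h1 : Nn k n = k*n + n := by show (k+1)*n = _; ring
  have hsucc := Nat.add_one_mul_choose_eq (Nn k n) (k*n)
  have h2 : (Nn k n).choose (k*n) = (Nn k n).choose n := by
    have hd : Nn k n - n = k*n := by omega
    rw [← hd, Nat.choose_symm (by omega : n ≤ Nn k n)]
  have h3 : (Tc k n).choose (k*n+1) = (Tc k n).choose n := by
    have hTc : Tc k n = Nn k n + 1 := rfl
    have hd : Tc k n - n = k*n+1 := by omega
    rw [← hd, Nat.choose_symm (by omega : n ≤ Tc k n)]
  have h4 : Nn k n + 1 = Tc k n := rfl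
  have h5 : (Nn k n + 1).choose (k*n+1) = (Tc k n).choose (k*n+1) := rfl
  rw [h4, h5, h3] at hsucc
  rw [← h2]
  exact hsucc

lemma card_perms (hk1 : 1 ≤ k) :
    Nat.card {π : Equiv.Perm (Fin ((k+1)*n)) //
        IsKShrubForest k n π ∧ Avoids π (![0, 1, 2] : Fin 3 → Fin 3)} * (k*n + 1)
      = ((k+1)*n).choose n := by
  have hA : Nat.card {π : Equiv.Perm (Fin ((k+1)*n)) //
        IsKShrubForest k n π ∧ Avoids π (![0, 1, 2] : Fin 3 → Fin 3)}
      = Nat.card {S' : Finset (Fin (Nn k n)) // S'.card = n ∧ CondS k n S'} :=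
    Nat.card_congr (permEquiv k n hk1)
  rw [hA, card_condS_eq k n]
  -- now: card goodZ * (k*n+1) = Nn.choose n
  have hC := card_goodZ k n trivial
  have hid := choose_identity k n
  have hTpos : 0 < Tc k n := by have : Tc k n = Nn k n + 1 := rfl; omega
  apply Nat.eq_of_mul_eq_mul_right hTpos
  calc Nat.card {S : Finset (ZMod (Tc k n)) // S.card = n ∧ GoodZ k n S} * (k*n+1) * (Tc k n)
      = (Nat.card {S : Finset (ZMod (Tc k n)) // S.card = n ∧ GoodZ k n S} * (Tc k n)) * (k*n+1) := by ring
    _ = (Tc k n).choose n * (k*n+1) := by rw [hC]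
    _ = (Tc k n) * ((Nn k n).choose n) := hid.symm
    _ = ((k+1)*n).choose n * Tc k n := by rw [Nat.mul_comm]

end Final

/-- The number of 123-avoiding `k`-ary shrub forests of `n` shrubs is
`(1/(kn+1)) * choose((k+1)n, n)`. -/
theorem card_kShrubForests_avoiding_123 (k n : ℕ) (hk : 2 ≤ k) :
    (Nat.card { π : Equiv.Perm (Fin ((k+1)*n)) //
        IsKShrubForest k n π ∧ Avoids π (![0, 1, 2] : Fin 3 → Fin 3) } : ℚ) =
      (1 / ((k : ℚ) * (n : ℚ) + 1)) * (((k+1)*n).choose n : ℚ) := by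
  have hk1 : 1 ≤ k := by omega
  have hfin := card_perms k n hk1
  have hq : (Nat.card { π : Equiv.Perm (Fin ((k+1)*n)) //
        IsKShrubForest k n π ∧ Avoids π (![0, 1, 2] : Fin 3 → Fin 3) } : ℚ)
        * ((k:ℚ) * (n:ℚ) + 1) = (((k+1)*n).choose n : ℚ) := by
    exact_mod_cast hfin
  have hnz : ((k:ℚ) * (n:ℚ) + 1) ≠ 0 := by positivity
  field_simp
  linarith [hq]
end

section
/- For every k ≥ 2 and n ≥ 0, if π and σ both belong to F^k_n(132) and their root values agree, i.e. π((k+1)i+1) = σ((k+1)i+1) for all 0 ≤ i < n, then π = σ. In other words, a 132-avoiding k-ary shrub forest is uniquely determined by its root labels. -/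
lemma aux_key (k n : ℕ) (π σ : Equiv.Perm (Fin ((k+1)*n)))
    (hπ : IsKShrubForest k n π)
    (hσav : Avoids σ (![0, 2, 1] : Fin 3 → Fin 3))
    (hroots : ∀ i : ℕ, (hi : i < n) → π ⟨(k+1)*i, root_lt hi⟩ = σ ⟨(k+1)*i, root_lt hi⟩)
    (p : Fin ((k+1)*n)) (hmin : ∀ q : Fin ((k+1)*n), q.val < p.val → π q = σ q)
    (hlt : π p < σ p) : False := by
  have hk1 : 0 < k + 1 := Nat.succ_pos k
  obtain ⟨i, j, hi, hjk, hij⟩ :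
      ∃ i j, i < n ∧ j < k + 1 ∧ p.val = (k+1)*i + j := by
    refine ⟨p.val / (k+1), p.val % (k+1), ?_, Nat.mod_lt _ hk1,
      (Nat.div_add_mod p.val (k+1)).symm⟩
    exact Nat.div_lt_iff_lt_mul hk1 |>.mpr
      (Nat.lt_of_lt_of_le p.isLt (le_of_eq (mul_comm _ _)))
  have hj1 : 1 ≤ j := by
    by_contra h
    have hpr : p = ⟨(k+1)*i, root_lt hi⟩ := Fin.ext (show p.val = (k+1)*i by omega)
    have h2 := hroots i hi
    rw [← hpr] at h2
    exact absurd h2 (ne_of_lt hlt)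
  have hjk' : j ≤ k := by omega
  have hpp : p = ⟨(k+1)*i + j, leaf_lt hi hjk'⟩ := Fin.ext (show p.val = (k+1)*i + j from hij)
  set p0 : Fin ((k+1)*n) := ⟨(k+1)*i, root_lt hi⟩ with hp0_def
  have h1 : π p0 < π p := by
    conv_rhs => rw [hpp]
    exact hπ i j hi hj1 hjk'
  have h2 : σ p0 = π p0 := (hroots i hi).symm
  set q : Fin ((k+1)*n) := σ.symm (π p) with hq_def
  have hq : σ q = π p := σ.apply_symm_apply _
  have hpq : p < q := by
    rcases lt_trichotomy q p with h | h | h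
    · have h3 := hmin q h
      have h4 : π q = π p := by rw [h3, hq]
      exact absurd (π.injective h4) (ne_of_lt h)
    · rw [h] at hq
      exact absurd hq.symm (ne_of_lt hlt)
    · exact h
  have hp0p : p0 < p := by
    rw [Fin.lt_def, hpp]
    simp only [hp0_def]
    omega
  have hp0q : p0 < q := lt_trans hp0p hpq
  have hv1 : σ p0 < σ q := by rw [h2, hq]; exact h1
  have hv2 : σ q < σ p := by rw [hq]; exact hlt
  have hv3 : σ p0 < σ p := lt_trans hv1 hv2
  apply hσav
  refine ⟨![p0, p, q], ?_, ?_⟩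
  · intro a b hab
    fin_cases a <;> fin_cases b <;>
      first
        | exact absurd hab (by decide)
        | exact hp0p
        | exact hpq
        | exact hp0q
  · intro a b
    fin_cases a <;> fin_cases b <;>
      first
        | exact iff_of_true hv1 (by decide)
        | exact iff_of_true hv2 (by decide)
        | exact iff_of_true hv3 (by decide)
        | exact iff_of_false (lt_irrefl _) (by decide)
        | exact iff_of_false (asymm hv1) (by decide)
        | exact iff_of_false (asymm hv2) (by decide)
        | exact iff_of_false (asymm hv3) (by decide)

/-- A 132-avoiding `k`-ary shrub forest is uniquely determined by its root labels. -/
theorem av132_determined_by_roots (k n : ℕ) (hk : 2 ≤ k)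
    (π σ : Equiv.Perm (Fin ((k+1)*n)))
    (hπ : IsKShrubForest k n π) (hσ : IsKShrubForest k n σ)
    (hπav : Avoids π (![0, 2, 1] : Fin 3 → Fin 3))
    (hσav : Avoids σ (![0, 2, 1] : Fin 3 → Fin 3))
    (hroots : ∀ i : ℕ, (hi : i < n) → π ⟨(k+1)*i, root_lt hi⟩ = σ ⟨(k+1)*i, root_lt hi⟩) :
    π = σ := by
  classical
  by_contra hne
  have hex : ∃ m : ℕ, ∃ h : m < (k+1)*n, π ⟨m, h⟩ ≠ σ ⟨m, h⟩ := by
    by_contra hall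
    push_neg at hall
    exact hne (Equiv.ext fun x => by
      have := hall x.val x.isLt
      simpa using this)
  obtain ⟨hplt, hpne⟩ := Nat.find_spec hex
  set m := Nat.find hex with hm_def
  set p : Fin ((k+1)*n) := ⟨m, hplt⟩ with hp_def
  have hmin : ∀ q : Fin ((k+1)*n), q.val < p.val → π q = σ q := by
    intro q hq
    by_contra hqne
    exact Nat.find_min hex hq ⟨q.isLt, by simpa using hqne⟩
  rcases lt_or_gt_of_ne hpne with h | h
  · exact aux_key k n π σ hπ hσav hroots p hmin h
  · exact aux_key k n σ π hσ hπav (fun i hi => (hroots i hi).symm) p (fun q hq => (hmin q hq).symm) h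
end

section
/- For all positive integers ℓ and m, the number of lattice paths with steps (0,1), (1,0) and (1,1), from (0,0) to (m, ℓm), remaining weakly below the line y = ℓx, equals (1/(ℓm+1)) · Σ_{v=0}^{m} binomial(ℓm+1, m−v) · binomial(ℓm+v, v). -/
namespace Schroeder

/-- prefix sum -/
def S (c : List ℤ) (i : ℕ) : ℤ := (c.take i).sum

lemma S_zero (c : List ℤ) : S c 0 = 0 := rfl

lemma S_length (c : List ℤ) : S c c.length = c.sum := by simp [S]

lemma sum_drop (c : List ℤ) (k : ℕ) : (c.drop k).sum = c.sum - S c k := by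
  have h : (c.take k).sum + (c.drop k).sum = c.sum := by
    rw [← List.sum_append, List.take_append_drop]
  simp only [S]; linarith

lemma S_add (c : List ℤ) (k i : ℕ) :
    S c (k + i) = S c k + ((c.drop k).take i).sum := by
  simp only [S, List.take_add, List.sum_append]

lemma rot_sum_lo (c : List ℤ) {k i : ℕ} (hk : k ≤ c.length) (hi : i ≤ c.length - k) :
    ((c.rotate k).take i).sum = S c (k + i) - S c k := by
  rw [List.rotate_eq_drop_append_take hk, List.take_append]
  have h0 : i - (c.drop k).length = 0 := by rw [List.length_drop]; omega
  rw [h0]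
  simp [S_add c k i]

lemma rot_sum_hi (c : List ℤ) {k t : ℕ} (hk : k ≤ c.length) (ht : t ≤ k) :
    ((c.rotate k).take (c.length - k + t)).sum = c.sum - S c k + S c t := by
  rw [List.rotate_eq_drop_append_take hk, List.take_append]
  have h1 : List.take (c.length - k + t) (c.drop k) = c.drop k := by
    apply List.take_of_length_le; simp
  have h2 : c.length - k + t - (c.drop k).length = t := by rw [List.length_drop]; omega
  rw [h1, h2, List.sum_append, sum_drop, List.take_take, min_eq_left ht]
  ring_nf
  simp [S]

/-- all proper prefixes (indeed all prefixes of length < length) have nonneg sum -/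
def Dom (c : List ℤ) : Prop := ∀ i < c.length, 0 ≤ (c.take i).sum

lemma exists_dom (c : List ℤ) (h1 : c.sum = -1) (hn : 0 < c.length) :
    ∃ j < c.length, Dom (c.rotate j) := by
  classical
  set n := c.length with hnn
  have hQ : ∃ i, 1 ≤ i ∧ i ≤ n ∧ ∀ u, 1 ≤ u → u ≤ n → S c i ≤ S c u := by
    obtain ⟨i, hi, hmin⟩ := (Finset.Icc 1 n).exists_min_image (S c) ⟨n, by simp only [Finset.mem_Icc]; omega⟩
    simp only [Finset.mem_Icc] at hi hmin
    exact ⟨i, hi.1, hi.2, fun u h1u h2u => hmin u ⟨h1u, h2u⟩⟩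
  obtain ⟨j, hj1, hjn, hjmin, hleast⟩ :
      ∃ j, 1 ≤ j ∧ j ≤ n ∧ (∀ u, 1 ≤ u → u ≤ n → S c j ≤ S c u) ∧
        ∀ t, t < j → ¬(1 ≤ t ∧ t ≤ n ∧ ∀ u, 1 ≤ u → u ≤ n → S c t ≤ S c u) :=
    ⟨Nat.find hQ, (Nat.find_spec hQ).1, (Nat.find_spec hQ).2.1, (Nat.find_spec hQ).2.2,
      fun t ht => Nat.find_min hQ ht⟩
  have hnotQ : ∀ t, 1 ≤ t → t < j → S c j < S c t := by
    intro t h1t htj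
    have := hleast t htj
    push_neg at this
    obtain ⟨u, hu1, hun, hlt⟩ := this h1t (by omega)
    exact lt_of_le_of_lt (hjmin u hu1 hun) hlt
  have hSn : S c n = -1 := by rw [S_length, h1]
  by_cases hjeq : j = n
  · -- rotate by 0, c itself is dominating
    refine ⟨0, hn, ?_⟩
    rw [List.rotate_zero]
    intro i hi
    rcases Nat.eq_zero_or_pos i with h | h
    · simp [h]
    · have := hnotQ i h (by omega)
      rw [hjeq, hSn] at this
      show (0:ℤ) ≤ S c i
      omega
  · have hjlt : j < n := lt_of_le_of_ne hjn hjeq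
    refine ⟨j, hjlt, ?_⟩
    intro i hi
    rw [List.length_rotate] at hi
    rcases le_or_gt i (n - j) with hile | higt
    · rcases Nat.eq_zero_or_pos i with h | h
      · simp [h]
      · rw [rot_sum_lo c (le_of_lt hjlt) hile]
        have := hjmin (j + i) (by omega) (by omega)
        omega
    · set t := i - (n - j) with htdef
      have hit : i = n - j + t := by omega
      have htk : t ≤ j := by omega
      rw [hit, rot_sum_hi c (le_of_lt hjlt) htk, h1]
      have htj : t < j := by omega
      rcases Nat.eq_zero_or_pos t with h | h
      · have : S c j ≤ S c n := hjmin n (by omega) le_rfl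
        rw [hSn] at this
        simp [h, S_zero]
        omega
      · have := hnotQ t h htj
        omega

lemma dom_pair_false (c : List ℤ) (h1 : c.sum = -1) {k1 k2 : ℕ}
    (hlt : k1 < k2) (hk2 : k2 < c.length)
    (d1 : Dom (c.rotate k1)) (d2 : Dom (c.rotate k2)) : False := by
  set n := c.length with hnn
  have hSn : S c n = -1 := by rw [S_length, h1]
  -- from d2 (k2 ≥ 1): wrapped prefix at t = k1 gives S c k1 ≥ S c k2 + 1
  have hk2le : k2 ≤ n := le_of_lt hk2
  have hB : 0 ≤ c.sum - S c k2 + S c k1 := by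
    have := d2 (n - k2 + k1) (by rw [List.length_rotate]; omega)
    rwa [rot_sum_hi c hk2le (le_of_lt hlt)] at this
  rw [h1] at hB
  rcases Nat.eq_zero_or_pos k1 with h0 | hpos
  · -- k1 = 0 : Dom c, so S c k2 ≥ 0; but hB gives S c k2 ≤ -1
    have := d1 k2 (by rw [List.length_rotate]; omega)
    rw [h0, List.rotate_zero] at this
    have h2 : (0:ℤ) ≤ S c k2 := this
    rw [h0, S_zero] at hB
    omega
  · -- k1 ≥ 1 : S c k1 ≤ S c k2
    have hA : 0 ≤ S c (k1 + (k2 - k1)) - S c k1 := by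
      have := d1 (k2 - k1) (by rw [List.length_rotate]; omega)
      rwa [rot_sum_lo c (by omega) (by omega)] at this
    have he : k1 + (k2 - k1) = k2 := by omega
    rw [he] at hA
    omega

lemma dom_unique (c : List ℤ) (h1 : c.sum = -1) {k1 k2 : ℕ}
    (hk1 : k1 < c.length) (hk2 : k2 < c.length)
    (d1 : Dom (c.rotate k1)) (d2 : Dom (c.rotate k2)) : k1 = k2 := by
  rcases lt_trichotomy k1 k2 with h | h | h
  · exact absurd (dom_pair_false c h1 h hk2 d1 d2) (by simp)
  · exact h
  · exact absurd (dom_pair_false c h1 h hk1 d2 d1) (by simp)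


def E : ℤ × ℤ := (1, 0)
def N : ℤ × ℤ := (0, 1)
def D : ℤ × ℤ := (1, 1)

lemma hEN : E ≠ N := by decide
lemma hED : E ≠ D := by decide
lemma hND : N ≠ D := by decide

def W : ℕ → Finset (List (ℤ × ℤ))
  | 0 => {[]}
  | (L+1) => ((W L).image (E :: ·)) ∪ ((W L).image (N :: ·)) ∪ ((W L).image (D :: ·))

lemma mem_W {L : ℕ} {u : List (ℤ × ℤ)} :
    u ∈ W L ↔ u.length = L ∧ ∀ s ∈ u, s = E ∨ s = N ∨ s = D := by
  induction L generalizing u with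
  | zero =>
    simp only [W, Finset.mem_singleton]
    constructor
    · rintro rfl; simp
    · rintro ⟨hlen, -⟩; exact List.eq_nil_of_length_eq_zero hlen
  | succ L ih =>
    simp only [W, Finset.mem_union, Finset.mem_image]
    constructor
    · rintro ((⟨v, hv, rfl⟩ | ⟨v, hv, rfl⟩) | ⟨v, hv, rfl⟩) <;>
      · obtain ⟨hlen, hall⟩ := ih.mp hv
        refine ⟨by simp [hlen], ?_⟩
        intro s hs
        rcases List.mem_cons.mp hs with rfl | hs
        · simp [E, N, D]
        · exact hall s hs
    · rintro ⟨hlen, hall⟩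
      match u with
      | [] => simp at hlen
      | a :: v =>
        have hv : v ∈ W L :=
          ih.mpr ⟨by simpa using hlen, fun s hs => hall s (List.mem_cons_of_mem _ hs)⟩
        rcases hall a (by simp) with rfl | rfl | rfl
        · exact Or.inl (Or.inl ⟨v, hv, rfl⟩)
        · exact Or.inl (Or.inr ⟨v, hv, rfl⟩)
        · exact Or.inr ⟨v, hv, rfl⟩

/-- the filter predicate fixing all three letter counts -/
def cnt (e f d : ℕ) (u : List (ℤ × ℤ)) : Prop :=
  u.count E = e ∧ u.count N = f ∧ u.count D = d

instance (e f d : ℕ) : DecidablePred (cnt e f d) := fun u => by unfold cnt; infer_instance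

lemma branch_card (L : ℕ) (a : ℤ × ℤ) (P : List (ℤ × ℤ) → Prop) [DecidablePred P] :
    (((W L).image (a :: ·)).filter P).card = ((W L).filter (fun v => P (a :: v))).card := by
  rw [Finset.filter_image]
  exact Finset.card_image_of_injective _ List.cons_injective

lemma disj_branches (L : ℕ) {a b : ℤ × ℤ} (hab : a ≠ b) :
    Disjoint ((W L).image (a :: ·)) ((W L).image (b :: ·)) := by
  rw [Finset.disjoint_left]
  intro x hx hx'
  simp only [Finset.mem_image] at hx hx'
  obtain ⟨v, -, rfl⟩ := hx
  obtain ⟨w, -, h⟩ := hx'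
  exact hab (List.head_eq_of_cons_eq h.symm)

lemma pas (n k : ℕ) : (n+1).choose (k+1) = n.choose k + n.choose (k+1) :=
  Nat.choose_succ_succ n k

lemma card_count : ∀ L e f d, e + f + d = L →
    ((W L).filter (cnt e f d)).card = L.choose e * (f + d).choose d := by
  intro L
  induction L with
  | zero =>
    intro e f d h
    obtain ⟨rfl, rfl, rfl⟩ : e = 0 ∧ f = 0 ∧ d = 0 := by omega
    simp [W, Finset.filter_singleton, cnt]
  | succ L ih =>
    intro e f d h
    have hsplit : ((W (L+1)).filter (cnt e f d)).card
        = (((W L).image (E :: ·)).filter (cnt e f d)).card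
          + (((W L).image (N :: ·)).filter (cnt e f d)).card
          + (((W L).image (D :: ·)).filter (cnt e f d)).card := by
      show ((((W L).image (E :: ·)) ∪ ((W L).image (N :: ·)) ∪ ((W L).image (D :: ·))).filter
        (cnt e f d)).card = _
      have d1 : Disjoint (((W L).image (E :: ·)).filter (cnt e f d))
          (((W L).image (N :: ·)).filter (cnt e f d)) :=
        Finset.disjoint_filter_filter (disj_branches L hEN)
      have d2 : Disjoint
          ((((W L).image (E :: ·)).filter (cnt e f d)) ∪ (((W L).image (N :: ·)).filter (cnt e f d)))
          (((W L).image (D :: ·)).filter (cnt e f d)) :=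
        Finset.disjoint_union_left.mpr
          ⟨Finset.disjoint_filter_filter (disj_branches L hED),
           Finset.disjoint_filter_filter (disj_branches L hND)⟩
      rw [Finset.filter_union, Finset.filter_union,
        Finset.card_union_of_disjoint d2, Finset.card_union_of_disjoint d1]
    rw [hsplit, branch_card, branch_card, branch_card]
    have pe : ∀ v : List (ℤ × ℤ), cnt e f d (E :: v) ↔ cnt (e-1) f d v ∧ 1 ≤ e := by
      intro v
      unfold cnt
      rw [List.count_cons_self, List.count_cons_of_ne hEN, List.count_cons_of_ne hED]
      omega
    have pn : ∀ v : List (ℤ × ℤ), cnt e f d (N :: v) ↔ cnt e (f-1) d v ∧ 1 ≤ f := by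
      intro v
      unfold cnt
      rw [List.count_cons_self, List.count_cons_of_ne hEN.symm, List.count_cons_of_ne hND]
      omega
    have pd : ∀ v : List (ℤ × ℤ), cnt e f d (D :: v) ↔ cnt e f (d-1) v ∧ 1 ≤ d := by
      intro v
      unfold cnt
      rw [List.count_cons_self, List.count_cons_of_ne hED.symm, List.count_cons_of_ne hND.symm]
      omega
    have hzE : ∀ f' d', f' = f → d' = d → e = 0 →
        Finset.filter (fun v => cnt e f' d' (E :: v)) (W L) = ∅ := by
      rintro f' d' rfl rfl rfl
      refine Finset.filter_false_of_mem (fun v _ h => ?_)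
      rw [pe v] at h; omega
    have hzN : f = 0 → Finset.filter (fun v => cnt e f d (N :: v)) (W L) = ∅ := by
      rintro rfl
      refine Finset.filter_false_of_mem (fun v _ h => ?_)
      rw [pn v] at h; omega
    have hzD : d = 0 → Finset.filter (fun v => cnt e f d (D :: v)) (W L) = ∅ := by
      rintro rfl
      refine Finset.filter_false_of_mem (fun v _ h => ?_)
      rw [pd v] at h; omega
    have hsE : 1 ≤ e → (Finset.filter (fun v => cnt e f d (E :: v)) (W L)).card
        = L.choose (e-1) * (f + d).choose d := by
      intro he
      rw [Finset.filter_congr (fun v _ => by rw [pe v]; exact and_iff_left he : ∀ v ∈ W L,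
        (cnt e f d (E :: v) ↔ cnt (e-1) f d v))]
      exact ih (e-1) f d (by omega)
    have hsN : 1 ≤ f → (Finset.filter (fun v => cnt e f d (N :: v)) (W L)).card
        = L.choose e * (f - 1 + d).choose d := by
      intro hf
      rw [Finset.filter_congr (fun v _ => by rw [pn v]; exact and_iff_left hf : ∀ v ∈ W L,
        (cnt e f d (N :: v) ↔ cnt e (f-1) d v))]
      exact ih e (f-1) d (by omega)
    have hsD : 1 ≤ d → (Finset.filter (fun v => cnt e f d (D :: v)) (W L)).card
        = L.choose e * (f + (d-1)).choose (d-1) := by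
      intro hd
      rw [Finset.filter_congr (fun v _ => by rw [pd v]; exact and_iff_left hd : ∀ v ∈ W L,
        (cnt e f d (D :: v) ↔ cnt e f (d-1) v))]
      exact ih e f (d-1) (by omega)
    rcases e with _ | e' <;> rcases f with _ | f' <;> rcases d with _ | d'
    · omega
    · -- (0,0,d'+1)
      rw [hzE 0 _ rfl rfl rfl, hzN rfl, hsD (by omega)]
      simp
    · -- (0,f'+1,0)
      rw [hzE _ 0 rfl rfl rfl, hzD rfl, hsN (by omega)]
      simp
    · -- (0,f'+1,d'+1)
      rw [hzE _ _ rfl rfl rfl, hsN (by omega), hsD (by omega)]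
      clear hsplit
      simp only [Finset.card_empty, Nat.choose_zero_right, one_mul, Nat.zero_add,
        Nat.add_sub_cancel]
      have e1 : f' + (d' + 1) = f' + d' + 1 := by ring
      have e2 : f' + 1 + d' = f' + d' + 1 := by ring
      have e3 : f' + 1 + (d' + 1) = (f' + d' + 1) + 1 := by ring
      rw [e1, e2, e3, pas (f' + d' + 1) d']
      omega
    · -- (e'+1,0,0)
      rw [hzN rfl, hzD rfl, hsE (by omega)]
      obtain rfl : L = e' := by omega
      simp [Nat.choose_self]
    · -- (e'+1,0,d'+1)
      rw [hzN rfl, hsE (by omega), hsD (by omega)]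
      clear hsplit
      simp only [Finset.card_empty, Nat.add_sub_cancel, Nat.zero_add, Nat.choose_self,
        mul_one, Nat.add_zero]
      exact (pas L e').symm
    · -- (e'+1,f'+1,0)
      rw [hzD rfl, hsE (by omega), hsN (by omega)]
      simp only [Finset.card_empty, Nat.add_sub_cancel, Nat.choose_zero_right, mul_one,
        Nat.add_zero]
      exact (pas L e').symm
    · -- (e'+1,f'+1,d'+1)
      rw [hsE (by omega), hsN (by omega), hsD (by omega)]
      simp only [Nat.add_sub_cancel]
      have e2 : f' + 1 + d' = f' + d' + 1 := by ring
      have e3 : f' + (d' + 1) = f' + d' + 1 := by ring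
      have e1 : f' + 1 + (d' + 1) = (f' + d' + 1) + 1 := by ring
      rw [e1, e2, e3, Nat.choose_succ_succ (f' + d' + 1) d', Nat.choose_succ_succ L e']
      ring


/-! ### weights -/

def wt (l : ℕ) (s : ℤ × ℤ) : ℤ := l * s.1 - s.2
def wts (l : ℕ) (u : List (ℤ × ℤ)) : List ℤ := u.map (wt l)
def wsum (l : ℕ) (u : List (ℤ × ℤ)) : ℤ := (wts l u).sum

lemma wts_length (l : ℕ) (u : List (ℤ × ℤ)) : (wts l u).length = u.length := by simp [wts]

lemma wts_append (l : ℕ) (u v : List (ℤ × ℤ)) : wts l (u ++ v) = wts l u ++ wts l v := by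
  simp [wts]

lemma wsum_append (l : ℕ) (u v : List (ℤ × ℤ)) : wsum l (u ++ v) = wsum l u + wsum l v := by
  simp [wsum, wts_append]

lemma wts_take (l : ℕ) (u : List (ℤ × ℤ)) (i : ℕ) :
    (wts l u).take i = wts l (u.take i) := by
  simp [wts, List.map_take]

lemma wts_rotate (l : ℕ) (u : List (ℤ × ℤ)) (j : ℕ) :
    wts l (u.rotate j) = (wts l u).rotate j := List.map_rotate _ _ _

lemma wt_E (l : ℕ) : wt l E = l := by simp [wt, E]
lemma wt_N (l : ℕ) : wt l N = -1 := by simp [wt, N]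
lemma wt_D (l : ℕ) : wt l D = l - 1 := by simp [wt, D]

lemma wsum_counts (l : ℕ) (u : List (ℤ × ℤ)) (hall : ∀ s ∈ u, s = E ∨ s = N ∨ s = D) :
    wsum l u = l * u.count E - u.count N + ((l : ℤ) - 1) * u.count D := by
  induction u with
  | nil => simp [wsum, wts]
  | cons a v ih =>
    have hv := fun s hs => hall s (List.mem_cons_of_mem a hs)
    have hsum : wsum l (a :: v) = wt l a + wsum l v := by simp [wsum, wts]
    rcases hall a (by simp) with rfl | rfl | rfl
    · rw [hsum, ih hv, wt_E, List.count_cons_self,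
        List.count_cons_of_ne hEN, List.count_cons_of_ne hED]
      push_cast; ring
    · rw [hsum, ih hv, wt_N, List.count_cons_of_ne hEN.symm, List.count_cons_self,
        List.count_cons_of_ne hND]
      push_cast; ring
    · rw [hsum, ih hv, wt_D, List.count_cons_of_ne hED.symm, List.count_cons_of_ne hND.symm,
        List.count_cons_self]
      push_cast; ring

/-! ### goodness -/

def good (l : ℕ) (u : List (ℤ × ℤ)) : Prop :=
  ∀ i ∈ Finset.range (u.length + 1), 0 ≤ wsum l (u.take i)

instance (l : ℕ) : DecidablePred (good l) := fun u => by unfold good; infer_instance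

lemma take_wts_append (l : ℕ) (g : List (ℤ × ℤ)) (s : ℤ × ℤ) {i : ℕ} (hi : i ≤ g.length) :
    (wts l (g ++ [s])).take i = wts l (g.take i) := by
  rw [wts_append, List.take_append]
  have h0 : i - (wts l g).length = 0 := by rw [wts_length]; omega
  rw [h0]
  simp [wts_take]

lemma good_iff_dom (l : ℕ) (g : List (ℤ × ℤ)) (s : ℤ × ℤ) :
    good l g ↔ Dom (wts l (g ++ [s])) := by
  unfold good Dom
  constructor
  · intro hg i hi
    rw [wts_length, List.length_append, List.length_singleton] at hi
    rw [take_wts_append l g s (by omega)]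
    exact hg i (Finset.mem_range.mpr (by omega))
  · intro hd i hi
    rw [Finset.mem_range] at hi
    have := hd i (by rw [wts_length, List.length_append, List.length_singleton]; omega)
    rwa [take_wts_append l g s (by omega)] at this

lemma split_last (l : ℕ) (hl : 1 ≤ l) (a : List (ℤ × ℤ)) (hne : a ≠ [])
    (hall : ∀ s ∈ a, s = E ∨ s = N ∨ s = D)
    (hdom : Dom (wts l a)) (hsum : wsum l a = -1) :
    a = a.dropLast ++ [N] ∧ good l a.dropLast := by
  have hax : a = a.dropLast ++ [a.getLast hne] := (List.dropLast_append_getLast hne).symm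
  have hlen : a.length = a.dropLast.length + 1 := by
    conv_lhs => rw [hax]
    simp
  have htk : a.take a.dropLast.length = a.dropLast := by
    have hdl : a.dropLast.length = a.length - 1 := List.length_dropLast
    rw [hdl, ← List.dropLast_eq_take]
  have hg0 : 0 ≤ wsum l a.dropLast := by
    have := hdom a.dropLast.length (by rw [wts_length]; omega)
    rwa [wts_take, htk] at this
  have hxsum : wsum l a = wsum l a.dropLast + wt l (a.getLast hne) := by
    conv_lhs => rw [hax]
    rw [wsum_append]
    simp [wsum, wts]
  have hxle : wt l (a.getLast hne) ≤ -1 := by omega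
  have hxN : a.getLast hne = N := by
    rcases hall _ (List.getLast_mem hne) with hx | hx | hx
    · rw [hx, wt_E] at hxle; exfalso; omega
    · exact hx
    · rw [hx, wt_D] at hxle; exfalso; omega
  rw [hxN] at hax
  refine ⟨hax, ?_⟩
  rw [good_iff_dom l a.dropLast N, ← hax]
  exact hdom

/-! ### the rotation bijection -/

lemma count_rotate (a : ℤ × ℤ) (u : List (ℤ × ℤ)) (j : ℕ) :
    (u.rotate j).count a = u.count a := by
  unfold List.count
  exact (u.rotate_perm j).countP_eq _

lemma card_rot (l : ℕ) (hl : 1 ≤ l) (e f d : ℕ)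
    (hbal : (l : ℤ) * e - f + ((l : ℤ) - 1) * d = 0) :
    ((W (e+f+d)).filter (fun u => cnt e f d u ∧ good l u)).card * (e+f+d+1)
      = ((W (e+f+d+1)).filter (cnt e (f+1) d)).card := by
  classical
  set L := e + f + d with hL
  set n := L + 1 with hn
  set G : Finset (List (ℤ × ℤ)) := (W L).filter (fun u => cnt e f d u ∧ good l u) with hG
  -- facts about elements of G
  have hGfact : ∀ g ∈ G, g.length = L ∧ (∀ s ∈ g, s = E ∨ s = N ∨ s = D) ∧
      cnt e f d g ∧ good l g := by
    intro g hg
    rw [hG, Finset.mem_filter, mem_W] at hg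
    tauto
  have hAfact : ∀ g ∈ G,
      (g ++ [N]).length = n ∧ (∀ s ∈ g ++ [N], s = E ∨ s = N ∨ s = D) ∧
      wsum l (g ++ [N]) = -1 ∧ Dom (wts l (g ++ [N])) := by
    intro g hg
    obtain ⟨hlen, hall, hcnt, hgood⟩ := hGfact g hg
    have hall' : ∀ s ∈ g ++ [N], s = E ∨ s = N ∨ s = D := by
      intro s hs
      rcases List.mem_append.mp hs with hs | hs
      · exact hall s hs
      · simp at hs; tauto
    refine ⟨by simp [hlen, hn], hall', ?_, ?_⟩
    · rw [wsum_append, wsum_counts l g hall, hcnt.1, hcnt.2.1, hcnt.2.2]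
      have : wsum l [N] = -1 := by simp [wsum, wts, wt_N]
      rw [this, hbal]
      ring
    · exact (good_iff_dom l g N).mp hgood
  have hcard : G.card * n = (G ×ˢ Finset.range n).card := by
    rw [Finset.card_product, Finset.card_range]
  rw [hcard]
  apply Finset.card_bij (fun (p : List (ℤ × ℤ) × ℕ) _ => (p.1 ++ [N]).rotate p.2)
  · -- maps into target
    rintro ⟨g, j⟩ hp
    rw [Finset.mem_product] at hp
    obtain ⟨hg, hj⟩ := hp
    obtain ⟨hlen, hall, hcnt, hgood⟩ := hGfact g hg
    dsimp only
    rw [Finset.mem_filter, mem_W]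
    have hperm := List.rotate_perm (g ++ [N]) j
    refine ⟨⟨?_, ?_⟩, ?_, ?_, ?_⟩
    · rw [List.length_rotate]; simp [hlen, hn]
    · intro s hs
      rw [List.mem_rotate] at hs
      exact (hAfact g hg).2.1 s hs
    · rw [count_rotate, List.count_append, hcnt.1]
      simp [List.count_singleton, hEN.symm]
    · rw [count_rotate, List.count_append, hcnt.2.1]
      simp [List.count_singleton]
    · rw [count_rotate, List.count_append, hcnt.2.2]
      simp [List.count_singleton, hND]
  · -- injective
    rintro ⟨g1, j1⟩ hp1 ⟨g2, j2⟩ hp2 heq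
    rw [Finset.mem_product, Finset.mem_range] at hp1 hp2
    obtain ⟨hg1, hj1⟩ := hp1
    obtain ⟨hg2, hj2⟩ := hp2
    obtain ⟨hlen1, -, hsum1, hdom1⟩ := hAfact g1 hg1
    obtain ⟨hlen2, -, hsum2, hdom2⟩ := hAfact g2 hg2
    simp only at heq
    have hmod : ∀ t : ℕ, (g1 ++ [N]).rotate (t % n) = (g1 ++ [N]).rotate t := by
      intro t
      have h := List.rotate_mod (g1 ++ [N]) t
      rwa [hlen1] at h
    have hb : g2 ++ [N] = (g1 ++ [N]).rotate ((j1 + (n - j2)) % n) := by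
      rw [hmod, ← List.rotate_rotate, heq, List.rotate_rotate]
      have h2 : j2 + (n - j2) = n := by omega
      rw [h2, ← hlen2, List.rotate_length]
    set c := wts l (g1 ++ [N]) with hc
    have hclen : c.length = n := by rw [hc, wts_length, hlen1]
    have hcsum : c.sum = -1 := hsum1
    have hk : (j1 + (n - j2)) % n < n := Nat.mod_lt _ (by omega)
    have hdomk : Dom (c.rotate ((j1 + (n - j2)) % n)) := by
      rw [hc, ← wts_rotate, ← hb]
      exact hdom2
    have hdom0 : Dom (c.rotate 0) := by rwa [List.rotate_zero]
    have hk0 : (j1 + (n - j2)) % n = 0 :=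
      dom_unique c hcsum (by omega) (by omega) hdomk hdom0
    have hjj : j1 = j2 := by
      obtain ⟨q, hq⟩ := Nat.dvd_of_mod_eq_zero hk0
      rcases q with _ | _ | q
      · omega
      · omega
      · exfalso
        have h3 : n * (q + 1 + 1) = n * q + 2 * n := by ring
        have h2 : 0 ≤ n * q := Nat.zero_le _
        omega
    subst hjj
    have hgg : g1 = g2 := by
      have := hb
      rw [hk0, List.rotate_zero] at this
      exact (List.append_cancel_right this.symm)
    rw [hgg]
  · -- surjective
    intro u hu
    rw [Finset.mem_filter, mem_W] at hu
    obtain ⟨⟨hulen, huall⟩, hucnt⟩ := hu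
    set c := wts l u with hc
    have hclen : c.length = n := by rw [hc, wts_length, hulen]
    have hcsum : c.sum = -1 := by
      show wsum l u = -1
      rw [wsum_counts l u huall, hucnt.1, hucnt.2.1, hucnt.2.2]
      push_cast
      push_cast at hbal
      linarith
    obtain ⟨j, hjn, hdomj⟩ := exists_dom c hcsum (by omega)
    rw [hclen] at hjn
    set a := u.rotate j with ha
    have hane : a ≠ [] := by
      intro h
      have := List.length_rotate u j
      rw [← ha, h] at this
      simp at this
      omega
    have haall : ∀ s ∈ a, s = E ∨ s = N ∨ s = D := by
      intro s hs
      rw [ha, List.mem_rotate] at hs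
      exact huall s hs
    have hadom : Dom (wts l a) := by
      rw [ha, wts_rotate, ← hc]
      exact hdomj
    have hperm := List.rotate_perm u j
    have hasum : wsum l a = -1 := by
      show (wts l a).sum = -1
      rw [ha, wts_rotate, ← hc]
      exact ((List.rotate_perm c j).sum_eq).trans hcsum
    obtain ⟨hsplit, hgood⟩ := split_last l hl a hane haall hadom hasum
    set g := a.dropLast with hgdef
    have halen : a.length = n := by rw [ha, List.length_rotate, hulen]
    have hglen : g.length = L := by
      have h1 : a.length = g.length + 1 := by
        conv_lhs => rw [hsplit]
        simp [hgdef]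
      omega
    have hgW : g ∈ W L := by
      rw [mem_W]
      refine ⟨hglen, fun s hs => haall s ?_⟩
      rw [hsplit]
      exact List.mem_append.mpr (Or.inl hs)
    have hacnt : a.count E = e ∧ a.count N = f + 1 ∧ a.count D = d := by
      refine ⟨?_, ?_, ?_⟩ <;> rw [ha, count_rotate]
      exacts [hucnt.1, hucnt.2.1, hucnt.2.2]
    have hgcnt : cnt e f d g := by
      have hE := hacnt.1
      have hN := hacnt.2.1
      have hD := hacnt.2.2
      rw [hsplit, List.count_append] at hE hN hD
      refine ⟨?_, ?_, ?_⟩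
      · rw [show ([N] : List (ℤ × ℤ)).count E = 0 from by simp [List.count_singleton, hEN.symm], Nat.add_zero] at hE
        exact hE
      · rw [show ([N] : List (ℤ × ℤ)).count N = 1 from by simp [List.count_singleton]] at hN
        omega
      · rw [show ([N] : List (ℤ × ℤ)).count D = 0 from by simp [List.count_singleton, hND], Nat.add_zero] at hD
        exact hD
    have hgG : g ∈ G := by
      rw [hG, Finset.mem_filter]
      exact ⟨hgW, hgcnt, hgood⟩
    refine ⟨⟨g, (n - j) % n⟩, ?_, ?_⟩
    · rw [Finset.mem_product, Finset.mem_range]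
      exact ⟨hgG, Nat.mod_lt _ (by omega)⟩
    · simp only
      rw [← hsplit]
      have hmod := List.rotate_mod a (n - j)
      rw [halen] at hmod
      rw [hmod, ha, List.rotate_rotate]
      have h4 : j + (n - j) = n := by omega
      rw [h4, ← hulen, List.rotate_length]

/-! ### paths vs words -/

lemma wsum_eq (l : ℕ) (u : List (ℤ × ℤ)) : wsum l u = l * u.sum.1 - u.sum.2 := by
  induction u with
  | nil => simp [wsum, wts]
  | cons a v ih =>
    have h : wsum l (a :: v) = wt l a + wsum l v := by simp [wsum, wts]
    rw [h, ih, List.sum_cons, Prod.fst_add, Prod.snd_add, wt]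
    ring

lemma len_count (u : List (ℤ × ℤ)) (hall : ∀ s ∈ u, s = E ∨ s = N ∨ s = D) :
    u.count E + u.count N + u.count D = u.length := by
  induction u with
  | nil => simp
  | cons a v ih =>
    have hv := ih (fun s hs => hall s (List.mem_cons_of_mem a hs))
    rcases hall a (by simp) with rfl | rfl | rfl
    · rw [List.count_cons_self, List.count_cons_of_ne hEN, List.count_cons_of_ne hED,
        List.length_cons]
      omega
    · rw [List.count_cons_of_ne hEN.symm, List.count_cons_self, List.count_cons_of_ne hND,
        List.length_cons]
      omega
    · rw [List.count_cons_of_ne hED.symm, List.count_cons_of_ne hND.symm, List.count_cons_self,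
        List.length_cons]
      omega

lemma sum_fst (u : List (ℤ × ℤ)) (hall : ∀ s ∈ u, s = E ∨ s = N ∨ s = D) :
    u.sum.1 = (u.count E : ℤ) + u.count D := by
  induction u with
  | nil => simp
  | cons a v ih =>
    have hv := ih (fun s hs => hall s (List.mem_cons_of_mem a hs))
    rw [List.sum_cons, Prod.fst_add]
    rcases hall a (by simp) with rfl | rfl | rfl
    · rw [List.count_cons_self, List.count_cons_of_ne hED, hv]
      show (1 : ℤ) + _ = _
      push_cast; ring
    · rw [List.count_cons_of_ne hEN.symm, List.count_cons_of_ne hND, hv]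
      show (0 : ℤ) + _ = _
      push_cast; ring
    · rw [List.count_cons_of_ne hED.symm, List.count_cons_self, hv]
      show (1 : ℤ) + _ = _
      push_cast; ring

lemma sum_snd (u : List (ℤ × ℤ)) (hall : ∀ s ∈ u, s = E ∨ s = N ∨ s = D) :
    u.sum.2 = (u.count N : ℤ) + u.count D := by
  induction u with
  | nil => simp
  | cons a v ih =>
    have hv := ih (fun s hs => hall s (List.mem_cons_of_mem a hs))
    rw [List.sum_cons, Prod.snd_add]
    rcases hall a (by simp) with rfl | rfl | rfl
    · rw [List.count_cons_of_ne hEN, List.count_cons_of_ne hED, hv]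
      show (0 : ℤ) + _ = _
      push_cast; ring
    · rw [List.count_cons_self, List.count_cons_of_ne hND, hv]
      show (1 : ℤ) + _ = _
      push_cast; ring
    · rw [List.count_cons_of_ne hND.symm, List.count_cons_self, hv]
      show (1 : ℤ) + _ = _
      push_cast; ring

/-! ### the per-diagonal count -/

def Gd (l m d : ℕ) : Finset (List (ℤ × ℤ)) :=
  (W ((m-d)+(l*m-d)+d)).filter (fun u => cnt (m-d) (l*m-d) d u ∧ good l u)

lemma key_choose (a v : ℕ) : (a+1) * ((a+v+1).choose v) = (a+v+1) * ((a+v).choose v) := by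
  have h1 : (a+v+1) * (a+v).choose v = (a+v+1).choose (v+1) * (v+1) := by
    simpa [Nat.succ_eq_add_one] using Nat.add_one_mul_choose_eq (a+v) v
  have h3 : a+v+1-v = a+1 := by omega
  calc (a+1) * (a+v+1).choose v = (a+v+1).choose v * (a+v+1-v) := by rw [h3, mul_comm]
    _ = (a+v+1).choose (v+1) * (v+1) := (Nat.choose_succ_right_eq _ _).symm
    _ = (a+v+1) * (a+v).choose v := h1.symm

lemma card_Gd (l m d : ℕ) (hl : 1 ≤ l) (hd : d ≤ m) :
    (Gd l m d).card * (l*m + (m-d) + 1)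
      = (l*m+(m-d)+1).choose (m-d) * (l*m+1).choose d := by
  have hdlm : d ≤ l * m := le_trans hd (Nat.le_mul_of_pos_left m hl)
  have hbal : (l : ℤ) * ((m-d : ℕ) : ℤ) - ((l*m-d : ℕ) : ℤ) + ((l : ℤ) - 1) * (d : ℤ) = 0 := by
    rw [Nat.cast_sub hd, Nat.cast_sub hdlm]
    push_cast
    ring
  have h1 := card_rot l hl (m-d) (l*m-d) d hbal
  have h2 := card_count ((m-d)+(l*m-d)+d+1) (m-d) ((l*m-d)+1) d (by omega)
  have h3 := h1.trans h2
  have e1 : (m-d)+(l*m-d)+d+1 = l*m+(m-d)+1 := by omega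
  have e2 : (l*m-d)+1+d = l*m+1 := by omega
  rw [e1, e2] at h3
  exact h3

end Schroeder

open Schroeder in
/-- **Schröder's theorem.** The number of lattice paths with steps `(0,1)`, `(1,0)` and
`(1,1)` from `(0,0)` to `(m, l*m)` remaining weakly below the line `y = l*x` equals
`(1/(lm+1)) * Σ_{v=0}^{m} choose(lm+1, m-v) * choose(lm+v, v)`. -/
theorem schroeder_lattice_paths (l m : ℕ) (hl : 0 < l) (hm : 0 < m) :
    (Nat.card { p : List (ℤ × ℤ) //
        (∀ s ∈ p, s = ((0 : ℤ), (1 : ℤ)) ∨ s = ((1 : ℤ), (0 : ℤ)) ∨ s = ((1 : ℤ), (1 : ℤ))) ∧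
        p.sum = ((m : ℤ), (l : ℤ) * (m : ℤ)) ∧
        ∀ i : ℕ, ((p.take i).sum).2 ≤ (l : ℤ) * ((p.take i).sum).1 } : ℚ) =
      (1 / ((l : ℚ) * (m : ℚ) + 1)) *
        ∑ v ∈ Finset.range (m+1), ((l*m+1).choose (m-v) : ℚ) * ((l*m+v).choose v : ℚ) := by
  classical
  have hl1 : 1 ≤ l := hl
  have hiff : ∀ p : List (ℤ × ℤ),
      ((∀ s ∈ p, s = ((0:ℤ),(1:ℤ)) ∨ s = ((1:ℤ),(0:ℤ)) ∨ s = ((1:ℤ),(1:ℤ))) ∧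
        p.sum = ((m:ℤ), (l:ℤ)*(m:ℤ)) ∧
        ∀ i : ℕ, ((p.take i).sum).2 ≤ (l:ℤ) * ((p.take i).sum).1)
      ↔ p ∈ (Finset.range (m+1)).biUnion (fun d => Gd l m d) := by
    intro p
    constructor
    · rintro ⟨hall0, hsum, hcond⟩
      have hall : ∀ s ∈ p, s = E ∨ s = N ∨ s = D := by
        intro s hs
        rcases hall0 s hs with h | h | h
        · exact Or.inr (Or.inl h)
        · exact Or.inl h
        · exact Or.inr (Or.inr h)
      have hf1 : (p.count E : ℤ) + p.count D = (m : ℤ) := by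
        rw [← sum_fst p hall, hsum]
      have hf2 : (p.count N : ℤ) + p.count D = (l : ℤ) * m := by
        rw [← sum_snd p hall, hsum]
      have hc1 : p.count E + p.count D = m := by exact_mod_cast hf1
      have hc2 : p.count N + p.count D = l * m := by exact_mod_cast hf2
      refine Finset.mem_biUnion.mpr ⟨p.count D, Finset.mem_range.mpr (by omega), ?_⟩
      rw [Gd, Finset.mem_filter, mem_W]
      have hlen := len_count p hall
      refine ⟨⟨by omega, hall⟩, ⟨by omega, by omega, rfl⟩, ?_⟩
      intro i _
      rw [wsum_eq]
      have := hcond i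
      linarith
    · intro hp
      obtain ⟨d, hd, hpG⟩ := Finset.mem_biUnion.mp hp
      rw [Finset.mem_range] at hd
      rw [Gd, Finset.mem_filter, mem_W] at hpG
      obtain ⟨⟨hlen, hall⟩, ⟨hcE, hcN, hcD⟩, hgood⟩ := hpG
      have hd' : d ≤ m := by omega
      have hdlm : d ≤ l * m := le_trans hd' (Nat.le_mul_of_pos_left m hl1)
      refine ⟨?_, ?_, ?_⟩
      · intro s hs
        rcases hall s hs with h | h | h
        · exact Or.inr (Or.inl h)
        · exact Or.inl h
        · exact Or.inr (Or.inr h)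
      · have h1 := sum_fst p hall
        have h2 := sum_snd p hall
        rw [hcE, hcD] at h1
        rw [hcN, hcD] at h2
        have e1 : ((m - d : ℕ) : ℤ) + (d : ℤ) = (m : ℤ) := by
          rw [Nat.cast_sub hd']; ring
        have e2 : ((l * m - d : ℕ) : ℤ) + (d : ℤ) = (l : ℤ) * m := by
          rw [Nat.cast_sub hdlm]; push_cast; ring
        exact Prod.ext (by rw [h1]; exact e1) (by rw [h2]; exact e2)
      · intro i
        rcases le_or_gt i p.length with hle | hgt
        · have := hgood i (Finset.mem_range.mpr (by omega))
          rw [wsum_eq] at this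
          linarith
        · have h0 := hgood p.length (Finset.mem_range.mpr (by omega))
          rw [wsum_eq, List.take_length] at h0
          rw [List.take_of_length_le (le_of_lt hgt)]
          linarith
  rw [Nat.card_congr (Equiv.subtypeEquivRight hiff), Nat.card_eq_finsetCard]
  have hdisj : ∀ x ∈ Finset.range (m+1), ∀ y ∈ Finset.range (m+1), x ≠ y →
      Disjoint (Gd l m x) (Gd l m y) := by
    intro x _ y _ hxy
    rw [Finset.disjoint_left]
    intro u hux huy
    rw [Gd, Finset.mem_filter] at hux huy
    exact hxy ((hux.2.1.2.2).symm.trans huy.2.1.2.2)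
  rw [Finset.card_biUnion hdisj, Nat.cast_sum, Finset.mul_sum,
    ← Finset.sum_range_reflect]
  apply Finset.sum_congr rfl
  intro d hd
  rw [Finset.mem_range] at hd
  have hd' : d ≤ m := by omega
  have hvd : m + 1 - 1 - d = m - d := by omega
  rw [hvd]
  have hmd : m - (m - d) = d := by omega
  have h5 := card_Gd l m (m-d) hl1 (by omega)
  rw [hmd] at h5
  -- h5 : (Gd l m (m-d)).card * (l*m + d + 1) = (l*m+d+1).choose d * (l*m+1).choose (m-d)
  have hq5 : ((Gd l m (m-d)).card : ℚ) * ((l*m + d + 1 : ℕ) : ℚ)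
      = (((l*m+d+1).choose d : ℕ) : ℚ) * (((l*m+1).choose (m-d) : ℕ) : ℚ) := by
    exact_mod_cast h5
  have hqk : ((l:ℚ) * (m:ℚ) + 1) * (((l*m+d+1).choose d : ℕ) : ℚ)
      = ((l*m + d + 1 : ℕ) : ℚ) * (((l*m+d).choose d : ℕ) : ℚ) := by
    exact_mod_cast key_choose (l*m) d
  have hB : ((l*m + d + 1 : ℕ) : ℚ) ≠ 0 := by positivity
  have hA : ((l:ℚ) * (m:ℚ) + 1) ≠ 0 := by positivity
  have h7 : ((Gd l m (m-d)).card : ℚ) * ((l:ℚ) * (m:ℚ) + 1) * ((l*m + d + 1 : ℕ) : ℚ)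
      = (((l*m+1).choose (m-d) : ℕ) : ℚ) * (((l*m+d).choose d : ℕ) : ℚ)
          * ((l*m + d + 1 : ℕ) : ℚ) := by
    calc ((Gd l m (m-d)).card : ℚ) * ((l:ℚ) * (m:ℚ) + 1) * ((l*m + d + 1 : ℕ) : ℚ)
        = (((Gd l m (m-d)).card : ℚ) * ((l*m + d + 1 : ℕ) : ℚ)) * ((l:ℚ) * (m:ℚ) + 1) := by
          ring
      _ = ((((l*m+d+1).choose d : ℕ) : ℚ) * (((l*m+1).choose (m-d) : ℕ) : ℚ))
            * ((l:ℚ) * (m:ℚ) + 1) := by rw [hq5]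
      _ = (((l:ℚ) * (m:ℚ) + 1) * (((l*m+d+1).choose d : ℕ) : ℚ))
            * (((l*m+1).choose (m-d) : ℕ) : ℚ) := by ring
      _ = (((l*m + d + 1 : ℕ) : ℚ) * (((l*m+d).choose d : ℕ) : ℚ))
            * (((l*m+1).choose (m-d) : ℕ) : ℚ) := by rw [hqk]
      _ = (((l*m+1).choose (m-d) : ℕ) : ℚ) * (((l*m+d).choose d : ℕ) : ℚ)
            * ((l*m + d + 1 : ℕ) : ℚ) := by ring
  have h8 := mul_right_cancel₀ hB h7
  rw [div_mul_eq_mul_div, one_mul, eq_div_iff hA]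
  linear_combination h8
end

section
/- Let ℓ be a positive integer and S a finite set of steps in ℤ × ℤ. For every m ≥ 0, the number of lattice paths with step set S from (0,0) to (m, ℓm) remaining weakly below the line y = ℓx equals the number of lattice paths with step set {(x+y, ℓx−y) : (x,y) ∈ S} from (0,0) to ((ℓ+1)m, 0) remaining weakly above the x-axis. -/
/-- The step transformation as an additive monoid hom. -/
def bwF (l : ℕ) : (ℤ × ℤ) →+ (ℤ × ℤ) where
  toFun t := (t.1 + t.2, (l : ℤ) * t.1 - t.2)
  map_zero' := by simp
  map_add' a b := by
    simp only [Prod.fst_add, Prod.snd_add, Prod.mk_add_mk, Prod.mk.injEq]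
    constructor <;> ring

/-- Inverse of the step transformation (on its image). -/
def bwG (l : ℕ) (u : ℤ × ℤ) : ℤ × ℤ :=
  ((u.1 + u.2) / ((l : ℤ) + 1), ((l : ℤ) * u.1 - u.2) / ((l : ℤ) + 1))

lemma bwGF (l : ℕ) (t : ℤ × ℤ) : bwG l (bwF l t) = t := by
  have hne : ((l : ℤ) + 1) ≠ 0 := by positivity
  simp only [bwG, bwF, AddMonoidHom.coe_mk, ZeroHom.coe_mk]
  have h1 : t.1 + t.2 + ((l : ℤ) * t.1 - t.2) = ((l : ℤ) + 1) * t.1 := by ring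
  have h2 : (l : ℤ) * (t.1 + t.2) - ((l : ℤ) * t.1 - t.2) = ((l : ℤ) + 1) * t.2 := by ring
  rw [h1, h2, Int.mul_ediv_cancel_left _ hne, Int.mul_ediv_cancel_left _ hne]

/-- **Banderier–Wallner.** Lattice paths with step set `S` from `(0,0)` to `(m, l*m)`
remaining weakly below `y = l*x` are equinumerous with lattice paths with step set
`{(x+y, l*x-y) : (x,y) ∈ S}` from `(0,0)` to `((l+1)*m, 0)` remaining weakly above the
`x`-axis. -/
theorem lattice_path_transformation (l : ℕ) (hl : 0 < l) (S : Finset (ℤ × ℤ)) (m : ℕ) :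
    Nat.card { p : List (ℤ × ℤ) //
        (∀ s ∈ p, s ∈ S) ∧
        p.sum = ((m : ℤ), (l : ℤ) * (m : ℤ)) ∧
        ∀ i : ℕ, ((p.take i).sum).2 ≤ (l : ℤ) * ((p.take i).sum).1 } =
      Nat.card { p : List (ℤ × ℤ) //
        (∀ s ∈ p, ∃ t ∈ S, s = (t.1 + t.2, (l : ℤ) * t.1 - t.2)) ∧
        p.sum = ((((l : ℤ) + 1) * (m : ℤ)), (0 : ℤ)) ∧
        ∀ i : ℕ, (0 : ℤ) ≤ ((p.take i).sum).2 } := by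
  apply Nat.card_congr
  have hsum : ∀ p : List (ℤ × ℤ), (p.map (bwF l)).sum = bwF l p.sum := fun p =>
    (map_list_sum (bwF l) p).symm
  have hFval : ∀ t : ℤ × ℤ, bwF l t = (t.1 + t.2, (l : ℤ) * t.1 - t.2) := fun t => rfl
  refine
    { toFun := fun p => ⟨p.1.map (bwF l), ?_, ?_, ?_⟩
      invFun := fun p => ⟨p.1.map (bwG l), ?_, ?_, ?_⟩
      left_inv := ?_
      right_inv := ?_ }
  · intro s hs
    rcases List.mem_map.1 hs with ⟨t, ht, rfl⟩
    exact ⟨t, p.2.1 t ht, rfl⟩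
  · rw [hsum, p.2.2.1, hFval]
    simp only [Prod.mk.injEq]
    constructor <;> ring
  · intro i
    rw [← List.map_take, hsum, hFval]
    have := p.2.2.2 i
    simp only
    omega
  · intro s hs
    rcases List.mem_map.1 hs with ⟨t, ht, rfl⟩
    rcases p.2.1 t ht with ⟨u, hu, rfl⟩
    rw [← hFval, bwGF]
    exact hu
  · -- sum condition for inverse: each element is f of something, so map g then compute
    have hfix : ∀ s ∈ p.1, bwF l (bwG l s) = s := by
      intro s hs
      rcases p.2.1 s hs with ⟨u, _, rfl⟩
      rw [← hFval, bwGF]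
    have hmap : (p.1.map (bwG l)).map (bwF l) = p.1 := by
      rw [List.map_map]
      exact List.map_congr_left (fun s hs => hfix s hs) |>.trans (List.map_id p.1)
    have := hsum (p.1.map (bwG l))
    rw [hmap, p.2.2.1] at this
    set q := (p.1.map (bwG l)).sum with hq
    have h1 : q.1 + q.2 = ((l : ℤ) + 1) * (m : ℤ) := congrArg Prod.fst this.symm
    have h2 : (l : ℤ) * q.1 - q.2 = 0 := congrArg Prod.snd this.symm
    have hne : ((l : ℤ) + 1) ≠ 0 := by positivity
    have hx : ((l : ℤ) + 1) * q.1 = ((l : ℤ) + 1) * (m : ℤ) := by linarith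
    have hx1 : q.1 = (m : ℤ) := mul_left_cancel₀ hne hx
    have hy : q.2 = (l : ℤ) * (m : ℤ) := by rw [← hx1]; linarith
    exact Prod.ext hx1 hy
  · intro i
    have hfix : ∀ s ∈ p.1.take i, bwF l (bwG l s) = s := by
      intro s hs
      rcases p.2.1 s (List.mem_of_mem_take hs) with ⟨u, _, rfl⟩
      rw [← hFval, bwGF]
    have hmap : ((p.1.take i).map (bwG l)).map (bwF l) = p.1.take i := by
      rw [List.map_map]
      exact (List.map_congr_left hfix).trans (List.map_id _)
    have := hsum ((p.1.take i).map (bwG l))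
    rw [hmap] at this
    have h2 := congrArg Prod.snd this
    have hge := p.2.2.2 i
    rw [← List.map_take]
    simp only [bwF, AddMonoidHom.coe_mk, ZeroHom.coe_mk] at h2
    omega
  · intro p
    apply Subtype.ext
    simp only [List.map_map]
    exact (List.map_congr_left (fun s _ => bwGF l s)).trans (List.map_id _)
  · intro p
    apply Subtype.ext
    have hfix : ∀ s ∈ p.1, bwF l (bwG l s) = s := by
      intro s hs
      rcases p.2.1 s hs with ⟨u, _, rfl⟩
      rw [← hFval, bwGF]
    simp only [List.map_map]
    exact (List.map_congr_left hfix).trans (List.map_id _)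
end

section
/- For every k ≥ 2 and n ≥ 0, the cardinality of F^k_n(231) equals the number of NE lattice paths from (0,0) to ((k+1)n, kn) that stay weakly below the line y = (k/(k+1))x, i.e. such that every visited point (x,y) satisfies (k+1)y ≤ kx. -/
namespace SFAux

lemma card_filter_val {m : ℕ} (p : ℕ → Prop) [DecidablePred p] :
    (Finset.univ.filter fun i : Fin m => p i.val).card
      = ((Finset.range m).filter p).card := by
  apply Finset.card_bij (fun i _ => i.val)
  · intro a ha; simp only [Finset.mem_filter, Finset.mem_range] at ha ⊢
    exact ⟨a.isLt, ha.2⟩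
  · intro a _ b _ h; exact Fin.ext h
  · intro b hb; simp only [Finset.mem_filter, Finset.mem_range] at hb
    exact ⟨⟨b, hb.1⟩, by simp [hb.2], rfl⟩

lemma card_filter_val_lt {m c : ℕ} (hc : c ≤ m) :
    (Finset.univ.filter fun i : Fin m => i.val < c).card = c := by
  rw [card_filter_val (p := fun x => x < c)]
  have : (Finset.range m).filter (fun x => x < c) = Finset.range c := by
    ext x; simp only [Finset.mem_filter, Finset.mem_range]; omega
  rw [this, Finset.card_range]

lemma card_filter_val_le {m c : ℕ} (hc : c < m) :
    (Finset.univ.filter fun i : Fin m => i.val ≤ c).card = c + 1 := by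
  rw [card_filter_val (p := fun x => x ≤ c)]
  have : (Finset.range m).filter (fun x => x ≤ c) = Finset.range (c+1) := by
    ext x; simp only [Finset.mem_filter, Finset.mem_range]; omega
  rw [this, Finset.card_range]

lemma card_filter_val_Ico {m a b : ℕ} (hb : b ≤ m) :
    (Finset.univ.filter fun i : Fin m => a ≤ i.val ∧ i.val < b).card = b - a := by
  rw [card_filter_val (p := fun x => a ≤ x ∧ x < b)]
  have : (Finset.range m).filter (fun x => a ≤ x ∧ x < b) = Finset.Ico a b := by
    ext x; simp only [Finset.mem_filter, Finset.mem_range, Finset.mem_Ico]; omega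
  rw [this, Nat.card_Ico]

lemma card_filter_val_Ioo {m a b : ℕ} (hb : b ≤ m) :
    (Finset.univ.filter fun i : Fin m => a < i.val ∧ i.val < b).card = b - a - 1 := by
  rw [card_filter_val (p := fun x => a < x ∧ x < b)]
  have : (Finset.range m).filter (fun x => a < x ∧ x < b) = Finset.Ioo a b := by
    ext x; simp only [Finset.mem_filter, Finset.mem_range, Finset.mem_Ioo]; omega
  rw [this, Nat.card_Ioo]

lemma downward_closed {m : ℕ} (V : Finset (Fin m))
    (h : ∀ v ∈ V, ∀ w, w ∉ V → v < w) (w : Fin m) : w ∈ V ↔ w.val < V.card := by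
  constructor
  · intro hw
    have hsub : (Finset.univ.filter fun u : Fin m => u.val ≤ w.val) ⊆ V := by
      intro u hu
      simp only [Finset.mem_filter] at hu
      by_contra hun
      have hlt := h w hw u hun
      rw [Fin.lt_def] at hlt
      omega
    have := Finset.card_le_card hsub
    rw [card_filter_val_le w.isLt] at this
    omega
  · intro hc
    by_contra hw
    have hsub : V ⊆ Finset.univ.filter fun u : Fin m => u.val < w.val := by
      intro v hv
      simp only [Finset.mem_filter, Finset.mem_univ, true_and]
      exact h v hv w hw
    have := Finset.card_le_card hsub
    rw [card_filter_val_lt (le_of_lt w.isLt)] at this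
    omega

end SFAux

namespace SFB
variable {m : ℕ}

def compl (π : Equiv.Perm (Fin m)) (x : ℕ) : Finset (Fin m) :=
  Finset.univ.filter fun j => j.val < x ∧ ∀ t : Fin m, x ≤ t.val → π j < π t

def cseq (π : Equiv.Perm (Fin m)) (x : ℕ) : ℕ := (compl π x).card

lemma mem_compl_iff {π : Equiv.Perm (Fin m)} {x : ℕ} {j : Fin m} :
    j ∈ compl π x ↔ j.val < x ∧ ∀ t : Fin m, x ≤ t.val → π j < π t := by
  simp [compl]

lemma compl_mono (π : Equiv.Perm (Fin m)) {x y : ℕ} (h : x ≤ y) :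
    compl π x ⊆ compl π y := by
  intro j hj
  rw [mem_compl_iff] at *
  exact ⟨lt_of_lt_of_le hj.1 h, fun t ht => hj.2 t (le_trans h ht)⟩

lemma cseq_mono (π : Equiv.Perm (Fin m)) : Monotone (cseq π) :=
  fun _ _ h => Finset.card_le_card (compl_mono π h)

lemma cseq_le (π : Equiv.Perm (Fin m)) (x : ℕ) : cseq π x ≤ x := by
  have h1 : compl π x ⊆ Finset.univ.filter fun j : Fin m => j.val < x := by
    intro j hj
    simp only [Finset.mem_filter, Finset.mem_univ, true_and]
    exact (mem_compl_iff.mp hj).1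
  have h2 := Finset.card_le_card h1
  rw [SFAux.card_filter_val (p := fun v => v < x)] at h2
  have h3 : (Finset.range m).filter (fun v => v < x) ⊆ Finset.range x := by
    intro v hv; simp only [Finset.mem_filter, Finset.mem_range] at hv ⊢; omega
  have h4 := Finset.card_le_card h3
  rw [Finset.card_range] at h4
  exact le_trans h2 h4

lemma cseq_top (π : Equiv.Perm (Fin m)) : cseq π m = m := by
  have : compl π m = Finset.univ := by
    ext j
    simp only [mem_compl_iff, Finset.mem_univ, iff_true]
    exact ⟨j.isLt, fun t ht => absurd t.isLt (by omega)⟩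
  rw [cseq, this, Finset.card_univ, Fintype.card_fin]

lemma mem_compl_iff_val (π : Equiv.Perm (Fin m)) (x : ℕ) (j : Fin m) :
    j ∈ compl π x ↔ (π j).val < cseq π x := by
  set V := (compl π x).image π with hV
  have hcard : V.card = cseq π x := Finset.card_image_of_injective _ π.injective
  have hdc : ∀ v ∈ V, ∀ w, w ∉ V → v < w := by
    intro v hv w hw
    obtain ⟨jv, hjv, rfl⟩ := Finset.mem_image.mp hv
    set i := π.symm w with hi
    have hwi : π i = w := π.apply_symm_apply w
    have hiV : i ∉ compl π x := by
      intro hic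
      exact hw (hwi ▸ Finset.mem_image_of_mem π hic)
    rw [mem_compl_iff] at hjv
    by_cases hix : x ≤ i.val
    · rw [← hwi]; exact hjv.2 i hix
    · rw [mem_compl_iff] at hiV
      push_neg at hiV
      obtain ⟨t, htx, hti⟩ := hiV (by omega)
      have htne : π t ≠ π i := by
        intro he
        have := π.injective he
        subst this
        omega
      have h1 : π t < π i := lt_of_le_of_ne hti htne
      rw [← hwi]
      exact lt_trans (hjv.2 t htx) h1
  have hkey := SFAux.downward_closed V hdc (π j)
  rw [hcard] at hkey
  rw [← hkey]
  constructor
  · intro h; exact Finset.mem_image_of_mem π h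
  · intro h
    obtain ⟨j', hj', hjj⟩ := Finset.mem_image.mp h
    rwa [← π.injective hjj]

lemma no_pattern_of_avoids {π : Equiv.Perm (Fin m)} (h : Avoids π ![1,2,0]) :
    ∀ a b c : Fin m, a < b → b < c → π c < π a → π a < π b → False := by
  intro a b c hab hbc hca hab'
  apply h
  refine ⟨![a,b,c], ?_, ?_⟩
  · intro x y hxy
    fin_cases x <;> fin_cases y <;>
      simp_all only [Matrix.cons_val_zero, Matrix.cons_val_one, Matrix.head_cons] <;>
      first
        | exact absurd hxy (by decide)
        | exact hab
        | exact hbc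
        | exact lt_trans hab hbc
  · have hcb : π c < π b := lt_trans hca hab'
    intro x y
    fin_cases x <;> fin_cases y <;>
      simp only [Matrix.cons_val_zero, Matrix.cons_val_one, Matrix.head_cons,
        Matrix.cons_val_two, Matrix.tail_cons] <;>
      constructor <;> intro h' <;>
      first
        | rfl
        | exact absurd h' (lt_irrefl _)
        | exact absurd h' (by decide)
        | decide
        | exact hab'
        | exact hcb
        | exact hca
        | exact absurd h' (asymm hab')
        | exact absurd h' (asymm hcb)
        | exact absurd h' (asymm hca)

lemma avoids_of_no_pattern {π : Equiv.Perm (Fin m)}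
    (h : ∀ a b c : Fin m, a < b → b < c → π c < π a → π a < π b → False) :
    Avoids π ![1,2,0] := by
  rintro ⟨f, hf, hiff⟩
  have h01 : f 0 < f 1 := hf (by decide)
  have h12 : f 1 < f 2 := hf (by decide)
  have hab : π (f 0) < π (f 1) := (hiff 0 1).mpr (by decide)
  have hca : π (f 2) < π (f 0) := (hiff 2 0).mpr (by decide)
  exact h (f 0) (f 1) (f 2) h01 h12 hca hab

end SFB

namespace SFB
variable {m : ℕ}

lemma qex (π : Equiv.Perm (Fin m)) (j : Fin m) :
    ∃ x, j.val < x ∧ ∀ t : Fin m, x ≤ t.val → π j < π t :=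
  ⟨m, j.isLt, fun t ht => absurd t.isLt (by omega)⟩

noncomputable def tstar (π : Equiv.Perm (Fin m)) (j : Fin m) : ℕ := Nat.find (qex π j)

lemma tstar_spec1 (π : Equiv.Perm (Fin m)) (j : Fin m) : j.val < tstar π j :=
  (Nat.find_spec (qex π j)).1

lemma tstar_spec2 (π : Equiv.Perm (Fin m)) (j : Fin m) :
    ∀ t : Fin m, tstar π j ≤ t.val → π j < π t :=
  (Nat.find_spec (qex π j)).2

lemma tstar_le (π : Equiv.Perm (Fin m)) (j : Fin m) : tstar π j ≤ m :=
  Nat.find_le ⟨j.isLt, fun t ht => absurd t.isLt (by omega)⟩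

lemma tstar_min (π : Equiv.Perm (Fin m)) (j : Fin m) {x : ℕ}
    (h1 : j.val < x) (h2 : x < tstar π j) :
    ∃ t : Fin m, x ≤ t.val ∧ π t < π j := by
  have := Nat.find_min (qex π j) h2
  push_neg at this
  obtain ⟨t, htx, hle⟩ := this h1
  have hne : π t ≠ π j := by
    intro he
    have := π.injective he
    subst this
    omega
  exact ⟨t, htx, lt_of_le_of_ne hle hne⟩

lemma below_tstar {π : Equiv.Perm (Fin m)} (hav : Avoids π ![1,2,0]) (j i : Fin m)
    (h1 : j.val < i.val) (h2 : i.val < tstar π j) : π i < π j := by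
  have hij : i ≠ j := by intro he; subst he; omega
  rcases Nat.lt_or_ge (i.val + 1) (tstar π j) with hc | hc
  · obtain ⟨t, htx, htlt⟩ := tstar_min π j (x := i.val + 1) (by omega) hc
    by_contra hcon
    have hji : π j < π i := lt_of_le_of_ne (not_lt.mp hcon) (fun he => hij (π.injective he.symm))
    exact no_pattern_of_avoids hav j i t (by rw [Fin.lt_def]; omega)
      (by rw [Fin.lt_def]; omega) htlt hji
  · by_contra hcon
    have hji : π j < π i := lt_of_le_of_ne (not_lt.mp hcon) (fun he => hij (π.injective he.symm))
    have : j.val < i.val ∧ ∀ t : Fin m, i.val ≤ t.val → π j < π t := by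
      refine ⟨h1, fun t ht => ?_⟩
      rcases Nat.eq_or_lt_of_le ht with he | hlt
      · have : t = i := Fin.ext he.symm
        subst this; exact hji
      · exact tstar_spec2 π j t (by omega)
    exact Nat.find_min (qex π j) h2 this

lemma key_i {π : Equiv.Perm (Fin m)} (hav : Avoids π ![1,2,0]) (j : Fin m) :
    cseq π j.val + tstar π j ≤ cseq π (tstar π j) + j.val := by
  set T := tstar π j with hT
  have hTm : T ≤ m := tstar_le π j
  have hjT : j.val < T := tstar_spec1 π j
  set S := Finset.univ.filter fun i : Fin m => j.val ≤ i.val ∧ i.val < T with hS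
  have hsub : compl π j.val ∪ S ⊆ compl π T := by
    intro i hi
    rcases Finset.mem_union.mp hi with hi | hi
    · exact compl_mono π (by omega) hi
    · simp only [hS, Finset.mem_filter, Finset.mem_univ, true_and] at hi
      rw [mem_compl_iff]
      refine ⟨hi.2, fun t ht => ?_⟩
      rcases Nat.eq_or_lt_of_le hi.1 with he | hlt
      · have hij : i = j := Fin.ext he.symm
        rw [hij]
        exact tstar_spec2 π j t ht
      · exact lt_trans (below_tstar hav j i hlt hi.2) (tstar_spec2 π j t ht)
  have hdisj : Disjoint (compl π j.val) S := by
    rw [Finset.disjoint_left]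
    intro i hi hiS
    rw [mem_compl_iff] at hi
    simp only [hS, Finset.mem_filter, Finset.mem_univ, true_and] at hiS
    omega
  have hcard := Finset.card_le_card hsub
  rw [Finset.card_union_of_disjoint hdisj] at hcard
  have hSc : S.card = T - j.val := SFAux.card_filter_val_Ico hTm
  rw [hSc] at hcard
  have : cseq π T ≤ m := le_trans (cseq_le π T) hTm
  unfold cseq at *
  omega

lemma key_ii {π : Equiv.Perm (Fin m)} (hav : Avoids π ![1,2,0]) (j : Fin m)
    {x : ℕ} (hx1 : j.val < x) (hx2 : x < tstar π j) :
    cseq π x + j.val < cseq π j.val + x := by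
  have hxm : x ≤ m := le_trans (le_of_lt hx2) (tstar_le π j)
  obtain ⟨t₀, ht₀x, ht₀⟩ := tstar_min π j hx1 hx2
  set S' := Finset.univ.filter fun i : Fin m => j.val < i.val ∧ i.val < x with hS
  have hsub : compl π x ⊆ compl π j.val ∪ S' := by
    intro i hi
    rw [mem_compl_iff] at hi
    rcases Nat.lt_trichotomy i.val j.val with hc | hc | hc
    · apply Finset.mem_union_left
      rw [mem_compl_iff]
      refine ⟨hc, fun t ht => ?_⟩
      by_contra hcon
      have hne : π t ≠ π i := fun he => by
        have := π.injective he; subst this; omega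
      have htlt : π t < π i := lt_of_le_of_ne (not_lt.mp hcon) hne
      have hij : π i < π j := lt_trans (hi.2 t₀ ht₀x) ht₀
      rcases Nat.eq_or_lt_of_le ht with he | hlt
      · have : t = j := Fin.ext he.symm
        subst this
        exact absurd hij (not_lt.mpr (le_of_lt htlt))
      · exact no_pattern_of_avoids hav i j t (by rw [Fin.lt_def]; omega)
          (by rw [Fin.lt_def]; omega) htlt hij
    · exfalso
      have hij : i = j := Fin.ext hc
      rw [hij] at hi
      exact absurd (hi.2 t₀ ht₀x) (not_lt.mpr (le_of_lt ht₀))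
    · apply Finset.mem_union_right
      simp only [hS, Finset.mem_filter, Finset.mem_univ, true_and]
      exact ⟨hc, hi.1⟩
  have hcard := le_trans (Finset.card_le_card hsub) (Finset.card_union_le _ _)
  have hSc : S'.card = x - j.val - 1 := SFAux.card_filter_val_Ioo hxm
  rw [hSc] at hcard
  unfold cseq at *
  omega

lemma key_iii {π : Equiv.Perm (Fin m)} (hav : Avoids π ![1,2,0]) (j : Fin m) :
    (π j).val + j.val + 1 = cseq π j.val + tstar π j := by
  set T := tstar π j with hT
  have hTm : T ≤ m := tstar_le π j
  have hjT : j.val < T := tstar_spec1 π j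
  set S'' := Finset.univ.filter fun i : Fin m => j.val < i.val ∧ i.val < T with hS
  set A := Finset.univ.filter fun u : Fin m => u.val < (π j).val with hA
  have hAB : A = (compl π j.val ∪ S'').image π := by
    ext u
    simp only [hA, Finset.mem_filter, Finset.mem_univ, true_and, Finset.mem_image]
    constructor
    · intro hu
      refine ⟨π.symm u, ?_, π.apply_symm_apply u⟩
      set i := π.symm u with hi
      have hui : π i = u := π.apply_symm_apply u
      have hij : i ≠ j := by
        intro he
        rw [he] at hui
        subst hui
        omega
      rcases Nat.lt_trichotomy i.val j.val with hc | hc | hc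
      · apply Finset.mem_union_left
        rw [mem_compl_iff]
        refine ⟨hc, fun t ht => ?_⟩
        by_contra hcon
        have hne : π t ≠ π i := fun he => by
          have := π.injective he; subst this; omega
        have htlt : π t < π i := lt_of_le_of_ne (not_lt.mp hcon) hne
        rcases Nat.eq_or_lt_of_le ht with he | hlt
        · have htj : t = j := Fin.ext he.symm
          rw [htj, Fin.lt_def] at htlt
          have huv : (π i).val = u.val := by rw [hui]
          omega
        · have hij' : π i < π j := by rw [hui]; rw [Fin.lt_def]; omega
          exact no_pattern_of_avoids hav i j t (by rw [Fin.lt_def]; omega)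
            (by rw [Fin.lt_def]; omega) htlt hij'
      · exact absurd (Fin.ext hc : i = j) hij
      · apply Finset.mem_union_right
        simp only [hS, Finset.mem_filter, Finset.mem_univ, true_and]
        refine ⟨hc, ?_⟩
        by_contra hcon
        have := tstar_spec2 π j i (by omega)
        rw [hui, Fin.lt_def] at this
        omega
    · rintro ⟨i, hi, rfl⟩
      rcases Finset.mem_union.mp hi with hi | hi
      · rw [mem_compl_iff] at hi
        have := hi.2 j (le_refl _)
        rw [Fin.lt_def] at this
        omega
      · simp only [hS, Finset.mem_filter, Finset.mem_univ, true_and] at hi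
        have := below_tstar hav j i hi.1 hi.2
        rw [Fin.lt_def] at this
        omega
  have hAcard : A.card = (π j).val :=
    SFAux.card_filter_val_lt (le_of_lt (π j).isLt)
  have hdisj : Disjoint (compl π j.val) S'' := by
    rw [Finset.disjoint_left]
    intro i hi hiS
    rw [mem_compl_iff] at hi
    simp only [hS, Finset.mem_filter, Finset.mem_univ, true_and] at hiS
    omega
  have hBcard : ((compl π j.val ∪ S'').image π).card = cseq π j.val + (T - j.val - 1) := by
    rw [Finset.card_image_of_injective _ π.injective,
      Finset.card_union_of_disjoint hdisj, SFAux.card_filter_val_Ioo hTm]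
    rfl
  rw [hAB, hBcard] at hAcard
  omega

lemma cseq_root_lt {π : Equiv.Perm (Fin m)} (hav : Avoids π ![1,2,0]) (r : ℕ)
    (hr : r + 1 < m) (hs : π ⟨r, by omega⟩ < π ⟨r+1, hr⟩) :
    cseq π r < cseq π (r+1) := by
  set jr : Fin m := ⟨r, by omega⟩ with hjr
  have hmem : jr ∈ compl π (r+1) := by
    rw [mem_compl_iff]
    refine ⟨by simp [hjr], fun t ht => ?_⟩
    by_contra hcon
    have hne : π t ≠ π jr := fun he => by
      have := π.injective he
      rw [this] at ht
      simp [hjr] at ht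
    have htlt : π t < π jr := lt_of_le_of_ne (not_lt.mp hcon) hne
    rcases Nat.eq_or_lt_of_le ht with he | hlt
    · have : t = ⟨r+1, hr⟩ := Fin.ext (by simpa using he.symm)
      subst this
      exact absurd hs (not_lt.mpr (le_of_lt htlt))
    · exact no_pattern_of_avoids hav jr ⟨r+1, hr⟩ t (by rw [Fin.lt_def]; simp [hjr])
        (by rw [Fin.lt_def]; simpa using hlt) htlt hs
  have hnot : jr ∉ compl π r := by
    rw [mem_compl_iff]
    intro h
    simp [hjr] at h
  exact Finset.card_lt_card
    ((Finset.ssubset_iff_of_subset (compl_mono π (by omega))).mpr ⟨jr, hmem, hnot⟩)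

end SFB

namespace SFC
open SFB

lemma ttex (c : ℕ → ℕ) (m j : ℕ) : ∃ x, j < x ∧ (c j + x ≤ c x + j ∨ m + 1 ≤ x) :=
  ⟨m + j + 1, by omega, Or.inr (by omega)⟩

noncomputable def tt (c : ℕ → ℕ) (m j : ℕ) : ℕ := Nat.find (ttex c m j)

lemma tt_gt (c : ℕ → ℕ) (m j : ℕ) : j < tt c m j := (Nat.find_spec (ttex c m j)).1

lemma tt_le {c : ℕ → ℕ} {m j : ℕ} (hj : j < m) (hcj : c j ≤ j) (hm : c m = m) :
    tt c m j ≤ m :=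
  Nat.find_le ⟨hj, Or.inl (by omega)⟩

lemma tt_spec {c : ℕ → ℕ} {m j : ℕ} (h' : tt c m j ≤ m) :
    c j + tt c m j ≤ c (tt c m j) + j := by
  unfold tt at h' ⊢
  rcases (Nat.find_spec (ttex c m j)).2 with h | h
  · exact h
  · omega

lemma tt_min {c : ℕ → ℕ} {m j : ℕ} {x : ℕ} (h1 : j < x) (h2 : x < tt c m j)
    (h3 : x ≤ m) : c x + j < c j + x := by
  have := Nat.find_min (ttex c m j) h2
  push_neg at this
  obtain ⟨h4, _⟩ := this h1
  omega

noncomputable def pv (c : ℕ → ℕ) (m j : ℕ) : ℕ := c j + (tt c m j - (j+1))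

section withHyps
variable {c : ℕ → ℕ} {m : ℕ} (hmono : Monotone c) (hle : ∀ x, x ≤ m → c x ≤ x)
  (hm : c m = m)

include hmono hle hm

lemma pv_lt {j : ℕ} (hj : j < m) : pv c m j < m := by
  have hT := tt_le hj (hle j (le_of_lt hj)) hm
  have hs := tt_spec (c := c) (m := m) (j := j) hT
  have hg := tt_gt c m j
  have hcT : c (tt c m j) ≤ m := by have := hmono hT; omega
  unfold pv
  omega

lemma pv_ge (j : ℕ) : c j ≤ pv c m j := Nat.le_add_right _ _

lemma ord_a {i j : ℕ} (hij : i < j) (hj : j < m) (h : tt c m i ≤ j) :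
    pv c m i < pv c m j := by
  have hi : i < m := lt_trans hij hj
  have hs := tt_spec (c := c) (m := m) (j := i) (le_trans h (le_of_lt hj))
  have hg := tt_gt c m i
  have hmo : c (tt c m i) ≤ c j := hmono h
  have hg2 := tt_gt c m j
  unfold pv
  omega

lemma ord_b {i j : ℕ} (hij : i < j) (hj : j < m) (h : j < tt c m i) :
    pv c m j < pv c m i ∧ tt c m j ≤ tt c m i := by
  have hi : i < m := lt_trans hij hj
  have hTi := tt_le hi (hle i (le_of_lt hi)) hm
  have hs := tt_spec (c := c) (m := m) (j := i) hTi
  have hg := tt_gt c m i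
  have hmin := tt_min hij h (le_of_lt hj)
  have htj : tt c m j ≤ tt c m i :=
    Nat.find_le ⟨h, Or.inl (by omega)⟩
  have hg2 := tt_gt c m j
  constructor
  · unfold pv; omega
  · exact htj

lemma pv_injective {i j : ℕ} (hi : i < m) (hj : j < m) (h : pv c m i = pv c m j) :
    i = j := by
  rcases Nat.lt_trichotomy i j with hc | hc | hc
  · rcases Nat.lt_or_ge j (tt c m i) with h2 | h2
    · exact absurd h (Nat.ne_of_gt (ord_b hmono hle hm hc hj h2).1)
    · exact absurd h (Nat.ne_of_lt (ord_a hmono hle hm hc hj h2))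
  · exact hc
  · rcases Nat.lt_or_ge i (tt c m j) with h2 | h2
    · exact absurd h (Nat.ne_of_lt (ord_b hmono hle hm hc hi h2).1)
    · exact absurd h (Nat.ne_of_gt (ord_a hmono hle hm hc hi h2))

noncomputable def psi : Equiv.Perm (Fin m) :=
  Equiv.ofBijective (fun j => ⟨pv c m j.val, pv_lt hmono hle hm j.isLt⟩)
    ((Finite.injective_iff_bijective).mp (fun a b hab =>
      Fin.ext (pv_injective hmono hle hm a.isLt b.isLt (congrArg Fin.val hab))))

lemma psi_apply (j : Fin m) : (psi hmono hle hm j).val = pv c m j.val := rfl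

lemma psi_avoids : Avoids (psi hmono hle hm) ![1,2,0] := by
  apply avoids_of_no_pattern
  intro a b c' hab hbc hca hab'
  rw [Fin.lt_def, psi_apply, psi_apply] at hca hab'
  rw [Fin.lt_def] at hab hbc
  have h1 : tt c m a.val ≤ b.val := by
    by_contra hcon
    push_neg at hcon
    exact absurd hab' (not_lt.mpr (le_of_lt (ord_b hmono hle hm hab b.isLt hcon).1))
  have h2 : b.val < tt c m a.val := by
    rcases Nat.lt_or_ge c'.val (tt c m a.val) with h2 | h2
    · omega
    · exact absurd hca (not_lt.mpr (le_of_lt (ord_a hmono hle hm (by omega) c'.isLt h2)))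
  omega

lemma cseq_psi {x : ℕ} (hx : x ≤ m) : cseq (psi hmono hle hm) x = c x := by
  have hset : compl (psi hmono hle hm) x
      = Finset.univ.filter fun j : Fin m => pv c m j.val < c x := by
    ext j
    rw [mem_compl_iff]
    simp only [Finset.mem_filter, Finset.mem_univ, true_and]
    constructor
    · rintro ⟨hjx, hall⟩
      rcases Nat.lt_or_ge x (tt c m j.val) with hc | hc
      · exfalso
        have hxm : x < m := by
          have := tt_le j.isLt (hle j.val (le_of_lt j.isLt)) hm
          omega
        have := (ord_b hmono hle hm hjx hxm hc).1
        have h2 := hall ⟨x, hxm⟩ (le_refl x)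
        rw [Fin.lt_def, psi_apply, psi_apply] at h2
        simp only at h2 this
        omega
      · have hs := tt_spec (c := c) (m := m) (j := j.val) (le_trans hc hx)
        have hmo : c (tt c m j.val) ≤ c x := hmono hc
        have hg := tt_gt c m j.val
        unfold pv
        omega
    · intro hpv
      have hjx : j.val < x := by
        by_contra hcon
        push_neg at hcon
        have : c x ≤ c j.val := hmono hcon
        have := pv_ge hmono hle hm (m := m) j.val
        omega
      have htt : tt c m j.val ≤ x := by
        by_contra hcon
        push_neg at hcon
        have := tt_min hjx hcon hx
        have hg := tt_gt c m j.val
        unfold pv at hpv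
        omega
      refine ⟨hjx, fun t ht => ?_⟩
      rw [Fin.lt_def, psi_apply, psi_apply]
      exact ord_a hmono hle hm (by omega) t.isLt (by omega)
  rw [cseq, hset]
  have hcx : c x ≤ m := le_trans (hle x hx) hx
  rw [show (Finset.univ.filter fun j : Fin m => pv c m j.val < c x).card
      = (Finset.univ.filter fun v : Fin m => v.val < c x).card from ?_,
    SFAux.card_filter_val_lt hcx]
  apply Finset.card_bij (fun j _ => psi hmono hle hm j)
  · intro a ha
    simp only [Finset.mem_filter, Finset.mem_univ, true_and] at ha ⊢
    exact ha
  · intro a _ b _ hab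
    exact (psi hmono hle hm).injective hab
  · intro v hv
    simp only [Finset.mem_filter, Finset.mem_univ, true_and] at hv ⊢
    exact ⟨(psi hmono hle hm).symm v, by
      rw [show pv c m ((psi hmono hle hm).symm v).val
          = ((psi hmono hle hm) ((psi hmono hle hm).symm v)).val from rfl,
        Equiv.apply_symm_apply]
      exact hv, Equiv.apply_symm_apply _ v⟩

end withHyps

lemma tt_congr {c1 c2 : ℕ → ℕ} {m j : ℕ} (h : ∀ x, x ≤ m → c1 x = c2 x)
    (hj : j < m) (h1 : c1 j ≤ j) (hm1 : c1 m = m) : tt c1 m j = tt c2 m j := by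
  have h1' : c2 j ≤ j := by rw [← h j (le_of_lt hj)]; exact h1
  have hm1' : c2 m = m := by rw [← h m (le_refl m)]; exact hm1
  have hT1 : tt c1 m j ≤ m := tt_le hj h1 hm1
  have hT2 : tt c2 m j ≤ m := tt_le hj h1' hm1'
  apply le_antisymm
  · apply Nat.find_le
    refine ⟨tt_gt c2 m j, Or.inl ?_⟩
    have := tt_spec (c := c2) (m := m) (j := j) hT2
    rw [← h j (le_of_lt hj), ← h _ hT2] at this
    exact this
  · apply Nat.find_le
    refine ⟨tt_gt c1 m j, Or.inl ?_⟩
    have := tt_spec (c := c1) (m := m) (j := j) hT1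
    rw [h j (le_of_lt hj), h _ hT1] at this
    exact this

lemma pv_congr {c1 c2 : ℕ → ℕ} {m j : ℕ} (h : ∀ x, x ≤ m → c1 x = c2 x)
    (hj : j < m) (h1 : c1 j ≤ j) (hm1 : c1 m = m) : pv c1 m j = pv c2 m j := by
  unfold pv
  rw [tt_congr h hj h1 hm1, h j (le_of_lt hj)]

lemma pv_cseq {m : ℕ} {π : Equiv.Perm (Fin m)} (hav : Avoids π ![1,2,0]) (j : Fin m) :
    pv (cseq π) m j.val = (π j).val := by
  have htt : tt (cseq π) m j.val = tstar π j := by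
    have hTle : tstar π j ≤ m := tstar_le π j
    apply le_antisymm
    · exact Nat.find_le ⟨tstar_spec1 π j, Or.inl (key_i hav j)⟩
    · by_contra hcon
      push_neg at hcon
      have hgt := tt_gt (cseq π) m j.val
      have hle2 : tt (cseq π) m j.val ≤ m := by omega
      have hs := tt_spec (c := cseq π) (m := m) (j := j.val) hle2
      have := key_ii hav j (x := tt (cseq π) m j.val) hgt hcon
      omega
  have hiii := key_iii hav j
  have h1 := tstar_spec1 π j
  unfold pv
  rw [htt]
  omega

end SFC

namespace SFE
open SFB SFC

def rstep (k x : ℕ) : ℕ := if (k+1) ∣ x then 1 else 0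

def rr (k x : ℕ) : ℕ := ((Finset.range x).filter (fun y => (k+1) ∣ y)).card

lemma rr_zero (k : ℕ) : rr k 0 = 0 := by simp [rr]

lemma rr_succ (k x : ℕ) : rr k (x+1) = rr k x + rstep k x := by
  unfold rr rstep
  rw [Finset.range_add_one, Finset.filter_insert]
  split
  · rw [Finset.card_insert_of_notMem (by simp)]
  · simp

lemma rr_bounds (k x : ℕ) : x ≤ (k+1) * rr k x ∧ (k+1) * rr k x ≤ x + k := by
  induction x with
  | zero => simp [rr_zero]
  | succ x ih =>
    rw [rr_succ]
    unfold rstep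
    split
    · rename_i hdvd
      obtain ⟨d, rfl⟩ := hdvd
      have h1 : d ≤ rr k ((k+1)*d) := by
        have := ih.1
        exact Nat.le_of_mul_le_mul_left this (by omega)
      have h2 : rr k ((k+1)*d) < d + 1 := by
        have := ih.2
        have h3 : (k+1) * rr k ((k+1)*d) < (k+1) * (d+1) := by
          have : (k+1) * (d+1) = (k+1)*d + (k+1) := by ring
          omega
        exact Nat.lt_of_mul_lt_mul_left h3
      have he : rr k ((k+1)*d) = d := by omega
      rw [he]
      constructor
      · have : (k+1) * (d + 1) = (k+1)*d + (k+1) := by ring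
        omega
      · have : (k+1) * (d + 1) = (k+1)*d + (k+1) := by ring
        omega
    · rename_i hdvd
      have hne : (k+1) * rr k x ≠ x := fun he => hdvd ⟨rr k x, he.symm⟩
      simp only [Nat.add_zero]
      omega

lemma rr_lower (k x : ℕ) : x ≤ (k+1) * rr k x := (rr_bounds k x).1

lemma rr_upper (k x : ℕ) : (k+1) * rr k x ≤ x + k := (rr_bounds k x).2

lemma rr_top (k n : ℕ) : rr k ((k+1)*n) = n := by
  have h1 := rr_lower k ((k+1)*n)
  have h2 := rr_upper k ((k+1)*n)
  have h3 : n ≤ rr k ((k+1)*n) := Nat.le_of_mul_le_mul_left h1 (by omega)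
  have h4 : (k+1) * rr k ((k+1)*n) < (k+1) * (n+1) := by
    have : (k+1) * (n+1) = (k+1)*n + (k+1) := by ring
    omega
  have h5 := Nat.lt_of_mul_lt_mul_left h4
  omega

lemma slope_of_le {k x s : ℕ} (h : s + rr k x ≤ x) : (k+1)*s ≤ k*x := by
  have h1 : (k+1)*(s + rr k x) ≤ (k+1)*x := Nat.mul_le_mul_left _ h
  have h2 : (k+1)*(s + rr k x) = (k+1)*s + (k+1)*(rr k x) := by ring
  have h3 : (k+1)*x = k*x + x := by ring
  have h4 := rr_lower k x
  omega

lemma le_of_slope {k x s : ℕ} (h : (k+1)*s ≤ k*x) : s + rr k x ≤ x := by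
  by_contra hcon
  push_neg at hcon
  have h1 : (k+1)*(x+1) ≤ (k+1)*(s + rr k x) := Nat.mul_le_mul_left _ hcon
  have h2 : (k+1)*(s + rr k x) = (k+1)*s + (k+1)*(rr k x) := by ring
  have h3 : (k+1)*(x+1) = k*x + x + k + 1 := by ring
  have h4 := rr_upper k x
  omega

lemma sum_take_mono (e : List ℕ) : ∀ x y, x ≤ y → (e.take x).sum ≤ (e.take y).sum := by
  have key : ∀ x, (e.take x).sum ≤ (e.take (x+1)).sum := by
    intro x
    rcases Nat.lt_or_ge x e.length with h | h
    · rw [List.sum_take_succ e x h]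
      omega
    · rw [List.take_of_length_le h, List.take_of_length_le (by omega)]
  intro x y hxy
  induction y with
  | zero => simp at hxy; subst hxy; exact le_refl _
  | succ y ih =>
    rcases Nat.eq_or_lt_of_le hxy with he | hlt
    · subst he; exact le_refl _
    · exact le_trans (ih (by omega)) (key y)

section perm
variable {k n : ℕ}

/-- The increment list associated to a permutation. -/
noncomputable def elist (k n : ℕ) (π : Equiv.Perm (Fin ((k+1)*n))) : List ℕ :=
  (List.range ((k+1)*n)).map fun x => cseq π (x+1) - (cseq π x + rstep k x)

lemma cseq_zero (π : Equiv.Perm (Fin ((k+1)*n))) : cseq π 0 = 0 := by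
  rw [cseq]
  convert Finset.card_empty
  ext j
  simp [mem_compl_iff]

lemma root_succ_lt {k n x : ℕ} (hk : 1 ≤ k) (hx : x < (k+1)*n) (hdvd : (k+1) ∣ x) :
    x + 1 < (k+1)*n := by
  obtain ⟨d, rfl⟩ := hdvd
  have hd : d < n := by
    by_contra h
    push_neg at h
    have := Nat.mul_le_mul_left (k+1) h
    omega
  have : (k+1)*(d+1) ≤ (k+1)*n := Nat.mul_le_mul_left _ hd
  have h2 : (k+1)*(d+1) = (k+1)*d + k + 1 := by ring
  omega

lemma cseq_step {π : Equiv.Perm (Fin ((k+1)*n))} (hk : 1 ≤ k)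
    (hsh : IsKShrubForest k n π) (hav : Avoids π ![1,2,0]) {x : ℕ} (hx : x < (k+1)*n) :
    cseq π x + rstep k x ≤ cseq π (x+1) := by
  unfold rstep
  split
  · rename_i hdvd
    obtain ⟨d, hd⟩ := hdvd
    have hx1 : x + 1 < (k+1)*n := root_succ_lt hk hx ⟨d, hd⟩
    have hdn : d < n := by
      by_contra h
      push_neg at h
      have := Nat.mul_le_mul_left (k+1) h
      omega
    have hs := hsh d 1 hdn (le_refl 1) hk
    have : π ⟨x, by omega⟩ < π ⟨x+1, hx1⟩ := by
      have hxe : x = (k+1)*d := hd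
      subst hxe
      exact hs
    exact cseq_root_lt hav x hx1 this
  · simp only [Nat.add_zero]
    exact cseq_mono π (by omega)

lemma sum_take_elist {π : Equiv.Perm (Fin ((k+1)*n))} (hk : 1 ≤ k)
    (hsh : IsKShrubForest k n π) (hav : Avoids π ![1,2,0]) :
    ∀ x, x ≤ (k+1)*n → ((elist k n π).take x).sum + rr k x = cseq π x := by
  intro x
  induction x with
  | zero => intro _; simp [rr_zero, cseq_zero]
  | succ x ih =>
    intro hx
    have hxm : x < (k+1)*n := by omega
    have hlen : x < (elist k n π).length := by simp [elist]; omega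
    rw [List.sum_take_succ _ x hlen, rr_succ]
    have hget : (elist k n π)[x]'hlen = cseq π (x+1) - (cseq π x + rstep k x) := by
      simp [elist]
    rw [hget]
    have hstep := cseq_step hk hsh hav hxm
    have := ih (by omega)
    omega

lemma elist_length (π : Equiv.Perm (Fin ((k+1)*n))) :
    (elist k n π).length = (k+1)*n := by simp [elist]

lemma elist_sum {π : Equiv.Perm (Fin ((k+1)*n))} (hk : 1 ≤ k)
    (hsh : IsKShrubForest k n π) (hav : Avoids π ![1,2,0]) :
    (elist k n π).sum = k*n := by
  have h := sum_take_elist hk hsh hav ((k+1)*n) (le_refl _)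
  rw [List.take_of_length_le (by rw [elist_length])] at h
  rw [cseq_top, rr_top] at h
  have : (k+1)*n = k*n + n := by ring
  omega

lemma elist_slope {π : Equiv.Perm (Fin ((k+1)*n))} (hk : 1 ≤ k)
    (hsh : IsKShrubForest k n π) (hav : Avoids π ![1,2,0]) :
    ∀ x, (k+1) * (((elist k n π).take x).sum) ≤ k * x := by
  intro x
  rcases le_or_gt x ((k+1)*n) with hx | hx
  · have h := sum_take_elist hk hsh hav x hx
    have hc := cseq_le π x
    exact slope_of_le (by omega)
  · rw [List.take_of_length_le (by rw [elist_length]; omega)]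
    rw [elist_sum hk hsh hav]
    calc (k+1) * (k*n) = k * ((k+1)*n) := by ring
    _ ≤ k * x := Nat.mul_le_mul_left _ (by omega)

/-- The count function associated to an increment list. -/
def cf (k : ℕ) (e : List ℕ) (x : ℕ) : ℕ := (e.take x).sum + rr k x

lemma cf_mono (k : ℕ) (e : List ℕ) : Monotone (cf k e) := by
  apply monotone_nat_of_le_succ
  intro x
  unfold cf
  rw [rr_succ]
  have := sum_take_mono e x (x+1) (Nat.le_succ x)
  omega

lemma cf_le {e : List ℕ} (hslope : ∀ x, (k+1) * ((e.take x).sum) ≤ k * x) :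
    ∀ x, x ≤ (k+1)*n → cf k e x ≤ x :=
  fun x _ => le_of_slope (hslope x)

lemma cf_top {e : List ℕ} (hlen : e.length = (k+1)*n) (hsum : e.sum = k*n) :
    cf k e ((k+1)*n) = (k+1)*n := by
  unfold cf
  rw [List.take_of_length_le (by omega), hsum, rr_top]
  ring

end perm
end SFE

namespace SFF
open SFB SFC SFE

def EmidP (k n : ℕ) (e : List ℕ) : Prop :=
  e.length = (k+1)*n ∧ e.sum = k*n ∧ ∀ x, (k+1) * ((e.take x).sum) ≤ k * x

section
variable {k n : ℕ}

lemma psi_shrub {e : List ℕ} (h : EmidP k n e) :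
    IsKShrubForest k n (psi (cf_mono k e) (cf_le (n := n) h.2.2) (cf_top h.1 h.2.1)) := by
  intro i j hi hj1 hj2
  rw [Fin.lt_def, psi_apply, psi_apply]
  simp only
  set r := (k+1)*i with hr
  have hrm : r + j < (k+1)*n := leaf_lt hi hj2
  have hstep : cf k e r + 1 ≤ cf k e (r+1) := by
    unfold cf
    rw [rr_succ]
    have h1 : rstep k r = 1 := by unfold rstep; rw [if_pos ⟨i, hr⟩]
    have h2 := sum_take_mono e r (r+1) (Nat.le_succ r)
    omega
  have htt : tt (cf k e) ((k+1)*n) r ≤ r + 1 :=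
    Nat.find_le ⟨by omega, Or.inl (by omega)⟩
  exact ord_a (cf_mono k e) (cf_le (n := n) h.2.2) (cf_top h.1 h.2.1)
    (show r < r + j by omega) hrm (by omega)

noncomputable def permToE (hk : 1 ≤ k)
    (x : {π : Equiv.Perm (Fin ((k+1)*n)) // IsKShrubForest k n π ∧ Avoids π ![1,2,0]}) :
    {e : List ℕ // EmidP k n e} :=
  ⟨elist k n x.val, elist_length x.val,
    elist_sum hk x.prop.1 x.prop.2, elist_slope hk x.prop.1 x.prop.2⟩

noncomputable def eToPerm
    (y : {e : List ℕ // EmidP k n e}) :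
    {π : Equiv.Perm (Fin ((k+1)*n)) // IsKShrubForest k n π ∧ Avoids π ![1,2,0]} :=
  ⟨psi (cf_mono k y.val) (cf_le (n := n) y.prop.2.2) (cf_top y.prop.1 y.prop.2.1),
    psi_shrub y.prop, psi_avoids _ _ _⟩

lemma eToPerm_permToE (hk : 1 ≤ k)
    (x : {π : Equiv.Perm (Fin ((k+1)*n)) // IsKShrubForest k n π ∧ Avoids π ![1,2,0]}) :
    eToPerm (permToE hk x) = x := by
  obtain ⟨π, hsh, hav⟩ := x
  apply Subtype.ext
  apply Equiv.ext
  intro j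
  apply Fin.ext
  show pv (cf k (elist k n π)) ((k+1)*n) j.val = (π j).val
  have hagree : ∀ z, z ≤ (k+1)*n → cf k (elist k n π) z = cseq π z := by
    intro z hz
    unfold cf
    exact sum_take_elist hk hsh hav z hz
  rw [pv_congr hagree j.isLt
    (cf_le (n := n) (elist_slope hk hsh hav) j.val (le_of_lt j.isLt))
    (cf_top (elist_length π) (elist_sum hk hsh hav))]
  exact pv_cseq hav j

lemma permToE_eToPerm (hk : 1 ≤ k) (y : {e : List ℕ // EmidP k n e}) :
    permToE hk (eToPerm y) = y := by
  obtain ⟨e, hlen, hsum, hslope⟩ := y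
  apply Subtype.ext
  show elist k n _ = e
  apply List.ext_getElem
  · rw [elist_length, hlen]
  · intro x h1 h2
    simp only [eToPerm] at h1 ⊢
    have hxm : x < (k+1)*n := by rw [elist_length] at h1; exact h1
    simp only [elist, List.getElem_map, List.getElem_range]
    rw [cseq_psi _ _ _ (show x+1 ≤ (k+1)*n by omega),
      cseq_psi _ _ _ (show x ≤ (k+1)*n by omega)]
    unfold cf
    rw [rr_succ, List.sum_take_succ e x h2]
    omega

noncomputable def permEquivE (hk : 1 ≤ k) :
    {π : Equiv.Perm (Fin ((k+1)*n)) // IsKShrubForest k n π ∧ Avoids π ![1,2,0]} ≃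
    {e : List ℕ // EmidP k n e} where
  toFun := permToE hk
  invFun := eToPerm
  left_inv := eToPerm_permToE hk
  right_inv := permToE_eToPerm hk

end
end SFF

namespace SFG

def estep : ℤ × ℤ := ((1:ℤ),(0:ℤ))
def nstep : ℤ × ℤ := ((0:ℤ),(1:ℤ))

def enc : List ℕ → List (ℤ × ℤ)
  | [] => []
  | a :: l => estep :: (List.replicate a nstep ++ enc l)

lemma enc_mem : ∀ l, ∀ s ∈ enc l, s = estep ∨ s = nstep := by
  intro l
  induction l with
  | nil => intro s hs; simp [enc] at hs
  | cons a l ih =>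
    intro s hs
    simp only [enc, List.mem_cons, List.mem_append, List.mem_replicate] at hs
    rcases hs with h | h | h
    · exact Or.inl h
    · exact Or.inr h.2
    · exact ih s h

lemma sum_replicate_nstep (a : ℕ) : (List.replicate a nstep).sum = ((0:ℤ), (a:ℤ)) := by
  induction a with
  | zero => simp; rfl
  | succ a ih =>
    rw [List.replicate_succ, List.sum_cons, ih, nstep]
    rw [Prod.mk_add_mk]
    norm_num
    push_cast
    ring

lemma enc_sum : ∀ l : List ℕ, (enc l).sum = ((l.length : ℤ), (l.sum : ℤ)) := by
  intro l
  induction l with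
  | nil => simp [enc]; rfl
  | cons a l ih =>
    rw [enc, List.sum_cons, List.sum_append, sum_replicate_nstep, ih, estep]
    rw [Prod.mk_add_mk, Prod.mk_add_mk]
    simp only [List.length_cons, List.sum_cons, Prod.mk.injEq]
    constructor <;> push_cast <;> ring

lemma enc_append : ∀ l1 l2 : List ℕ, enc (l1 ++ l2) = enc l1 ++ enc l2 := by
  intro l1 l2
  induction l1 with
  | nil => simp [enc]
  | cons a l ih =>
    show enc ((a :: l) ++ l2) = _
    rw [List.cons_append, enc, enc, ih]
    simp [List.append_assoc]

def dec : List (ℤ × ℤ) → ℕ × List ℕ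
  | [] => (0, [])
  | s :: p => if s = nstep then ((dec p).1 + 1, (dec p).2) else (0, (dec p).1 :: (dec p).2)

lemma dec_recon : ∀ p : List (ℤ × ℤ), (∀ s ∈ p, s = estep ∨ s = nstep) →
    p = List.replicate (dec p).1 nstep ++ enc (dec p).2 := by
  intro p
  induction p with
  | nil => intro _; rfl
  | cons s p ih =>
    intro h
    have hp := ih (fun t ht => h t (List.mem_cons_of_mem s ht))
    rcases h s List.mem_cons_self with he | hn
    · subst he
      have hne : estep ≠ nstep := by decide
      rw [dec, if_neg hne]
      show estep :: p = List.replicate 0 nstep ++ enc ((dec p).1 :: (dec p).2)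
      rw [List.replicate_zero, List.nil_append, enc]
      rw [← hp]
    · subst hn
      rw [dec, if_pos rfl]
      show nstep :: p = List.replicate ((dec p).1 + 1) nstep ++ enc (dec p).2
      rw [List.replicate_succ, List.cons_append, ← hp]

lemma dec_rep : ∀ (a : ℕ) (q : List (ℤ × ℤ)),
    dec (List.replicate a nstep ++ q) = ((dec q).1 + a, (dec q).2) := by
  intro a q
  induction a with
  | zero => simp
  | succ a ih =>
    rw [List.replicate_succ, List.cons_append, dec, if_pos rfl, ih]
    simp only [Prod.mk.injEq]
    exact ⟨by omega, trivial⟩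

lemma dec_enc : ∀ l : List ℕ, dec (enc l) = (0, l) := by
  intro l
  induction l with
  | nil => rfl
  | cons a l ih =>
    rw [enc, dec, if_neg (by decide), dec_rep, ih]
    simp

lemma enc_pre (l : List ℕ) : ∀ i : ℕ, ∃ x y : ℕ,
    ((enc l).take i).sum = ((x : ℤ), (y : ℤ)) ∧ x ≤ l.length ∧ y ≤ (l.take x).sum := by
  induction l with
  | nil => intro i; exact ⟨0, 0, by simp [enc]; rfl, by simp, by simp⟩
  | cons a l ih =>
    intro i
    match i with
    | 0 => exact ⟨0, 0, by simp; rfl, by simp, by simp⟩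
    | Nat.succ i =>
      rw [enc, List.take_succ_cons, List.sum_cons]
      rcases le_or_gt i a with hc | hc
      · refine ⟨1, i, ?_, by simp, ?_⟩
        · rw [List.take_append, List.length_replicate,
            Nat.sub_eq_zero_of_le hc, List.take_zero, List.append_nil,
            List.take_replicate, inf_eq_left.mpr hc, sum_replicate_nstep, estep,
            Prod.mk_add_mk]
          norm_num
        · simpa using hc
      · obtain ⟨x', y', hsum, hx', hy'⟩ := ih (i - a)
        refine ⟨x' + 1, a + y', ?_, by simpa using hx', ?_⟩
        · rw [List.take_append, List.length_replicate,
            List.take_replicate, inf_eq_right.mpr (le_of_lt hc),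
            List.sum_append, sum_replicate_nstep, hsum, estep,
            Prod.mk_add_mk, Prod.mk_add_mk]
          simp only [Prod.mk.injEq]
          constructor <;> push_cast <;> ring
        · rw [List.take_succ_cons, List.sum_cons]
          omega

lemma enc_take_exact (l : List ℕ) (x : ℕ) (hx : x ≤ l.length) :
    ((enc l).take ((enc (l.take x)).length)).sum = ((x : ℤ), ((l.take x).sum : ℤ)) := by
  have h1 : enc l = enc (l.take x) ++ enc (l.drop x) := by
    rw [← enc_append, List.take_append_drop]
  rw [h1, List.take_left, enc_sum, List.length_take, Nat.min_eq_left hx]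

end SFG

namespace SFH
open SFG SFF

def PathP (k n : ℕ) (p : List (ℤ × ℤ)) : Prop :=
  (∀ s ∈ p, s = ((1 : ℤ), (0 : ℤ)) ∨ s = ((0 : ℤ), (1 : ℤ))) ∧
  p.sum = (((k+1)*n : ℤ), ((k*n : ℕ) : ℤ)) ∧
  ∀ i : ℕ, ((k : ℤ) + 1) * ((p.take i).sum).2 ≤ (k : ℤ) * ((p.take i).sum).1

lemma enc_path {k n : ℕ} {e : List ℕ} (he : EmidP k n e) : PathP k n (enc e) := by
  obtain ⟨hlen, hsum, hslope⟩ := he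
  refine ⟨fun s hs => enc_mem e s hs, ?_, ?_⟩
  · rw [enc_sum, hlen, hsum]
    have h1 : (((k+1)*n : ℕ) : ℤ) = ((k+1)*n : ℤ) := by push_cast; ring
    rw [h1]
  · intro i
    obtain ⟨x, y, hs, hx, hy⟩ := enc_pre e i
    rw [hs]
    show ((k:ℤ) + 1) * (y:ℤ) ≤ (k:ℤ) * (x:ℤ)
    have hnat : (k+1)*y ≤ k*x :=
      le_trans (Nat.mul_le_mul_left _ hy) (hslope x)
    exact_mod_cast hnat

lemma path_enc {k n : ℕ} {p : List (ℤ × ℤ)} (hp : PathP k n p) :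
    EmidP k n (dec p).2 ∧ enc (dec p).2 = p := by
  obtain ⟨hmem, hsum, hslope⟩ := hp
  have hrec := dec_recon p hmem
  have ha0 : (dec p).1 = 0 := by
    by_contra hcon
    obtain ⟨a', ha'⟩ : ∃ a', (dec p).1 = a' + 1 := ⟨(dec p).1 - 1, by omega⟩
    rw [ha', List.replicate_succ, List.cons_append] at hrec
    have ht1 : p.take 1 = [nstep] := by rw [hrec]; rfl
    have := hslope 1
    rw [ht1] at this
    simp only [List.sum_cons, List.sum_nil, nstep] at this
    have hk0 : (0:ℤ) ≤ (k:ℤ) := Int.ofNat_nonneg k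
    simp at this
    omega
  rw [ha0, List.replicate_zero, List.nil_append] at hrec
  set e := (dec p).2 with hedef
  have hsum2 : (enc e).sum = (((k+1)*n : ℤ), ((k*n : ℕ) : ℤ)) := by rw [← hrec]; exact hsum
  rw [enc_sum] at hsum2
  have hlen : e.length = (k+1)*n := by
    have h1 := congrArg Prod.fst hsum2
    simp only at h1
    exact_mod_cast h1
  have hesum : e.sum = k*n := by
    have h2 := congrArg Prod.snd hsum2
    simp only at h2
    exact_mod_cast h2
  refine ⟨⟨hlen, hesum, ?_⟩, hrec.symm⟩
  intro x
  rcases le_or_gt x e.length with hx | hx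
  · have hsl := hslope ((enc (e.take x)).length)
    rw [hrec, enc_take_exact e x hx] at hsl
    dsimp only at hsl
    exact_mod_cast hsl
  · rw [List.take_of_length_le (by omega), hesum]
    calc (k+1) * (k*n) = k * ((k+1)*n) := by ring
    _ ≤ k * x := Nat.mul_le_mul_left _ (by omega)

def eEquivPath (k n : ℕ) : {e : List ℕ // EmidP k n e} ≃ {p : List (ℤ × ℤ) // PathP k n p} where
  toFun e := ⟨enc e.val, enc_path e.prop⟩
  invFun p := ⟨(dec p.val).2, (path_enc p.prop).1⟩
  left_inv e := Subtype.ext (by simp only [dec_enc])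
  right_inv p := Subtype.ext ((path_enc p.prop).2)

end SFH


/-- The number of 231-avoiding `k`-ary shrub forests of `n` shrubs equals the number of
NE lattice paths from `(0,0)` to `((k+1)n, kn)` staying weakly below the line
`y = (k/(k+1))x`, i.e. with `(k+1)y ≤ kx` at every visited point. -/
theorem card_kShrubForests_avoiding_231_eq_paths (k n : ℕ) (hk : 2 ≤ k) :
    Nat.card { π : Equiv.Perm (Fin ((k+1)*n)) //
        IsKShrubForest k n π ∧ Avoids π (![1, 2, 0] : Fin 3 → Fin 3) } =
      Nat.card { p : List (ℤ × ℤ) //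
        (∀ s ∈ p, s = ((1 : ℤ), (0 : ℤ)) ∨ s = ((0 : ℤ), (1 : ℤ))) ∧
        p.sum = (((k+1)*n : ℤ), ((k*n : ℕ) : ℤ)) ∧
        ∀ i : ℕ, ((k : ℤ) + 1) * ((p.take i).sum).2 ≤ (k : ℤ) * ((p.take i).sum).1 } :=
  Nat.card_congr ((SFF.permEquivE (by omega : 1 ≤ k)).trans (SFH.eEquivPath k n))
end
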